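/- arXiv:2404.18765 — 2 statements merged into one kernel-verified Lean document; each statement's English description precedes it below -/
import Mathlib

section
/- Fix s0 > 0 and regard ε2 as a function of r0 ∈ (s0,∞), with ε2(r0,s0) = ε21(r0,s0) + ε22(r0,s0) + ε23(r0,s0), where ε21 = 2·Φ̃2/Φ2inf(∞), ε22 = G̃2/H_inf² + 2·G2sup·H_sup·H̃/H_inf⁴, and ε23 = (Φ2sup/Φ2inf(∞))·ε22 + (G2sup/H_inf²)·ε21 (all constituents depending on (r0,s0) as defined in the context). Then: (a) r0 ↦ ε2(r0,s0) is a decreasing function on (s0,∞), ε2(r0,s0) → +∞ as r0 → s0⁺, and ε2(r0,s0) → 0 as r0 → +∞; (b) for each s0 > 0 there exists r2(s0) > s0 such that ε2(r2(s0),s0) = 1 and ε2(r0,s0) < 1 for all r0 > r2(s0). -/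
open MeasureTheory Filter Topology

noncomputable section

/-- The bundle of fixed constants of the problem. -/
structure Cst where
  nu : ℝ
  mu : ℝ
  a : ℝ
  D1 : ℝ
  D2 : ℝ
  Q : ℝ
  D1s : ℝ
  D2s : ℝ
  L1m : ℝ
  L1M : ℝ
  N1m : ℝ
  N1M : ℝ
  K1m : ℝ
  K1M : ℝ
  L2m : ℝ
  L2M : ℝ
  N2m : ℝ
  N2M : ℝ
  K2m : ℝ
  K2M : ℝ
  Lt1 : ℝ
  Nt1 : ℝ
  Kt1 : ℝ
  Lt2 : ℝ
  Nt2 : ℝ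
  Kt2 : ℝ

/-- The space `C[s0,r0]`, modeled as real functions continuous on `[s0,r0]`. -/
def C1 (s0 r0 : ℝ) : Set (ℝ → ℝ) := {f | ContinuousOn f (Set.Icc s0 r0)}

/-- The set `ℳ ⊆ C_b[r0,∞)`: bounded continuous functions on `[r0,∞)` with
`f(r0) = 0` and `f(η) → -1` as `η → ∞`. -/
def Mset (r0 : ℝ) : Set (ℝ → ℝ) :=
  {f | ContinuousOn f (Set.Ici r0) ∧ (∃ C, ∀ x ∈ Set.Ici r0, |f x| ≤ C) ∧
    f r0 = 0 ∧ Tendsto f atTop (𝓝 (-1))}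

/-- Sup norm of `f` over the set `S`. -/
def supOn (S : Set ℝ) (f : ℝ → ℝ) : ℝ := ⨆ x : S, |f x.1|

/-- Norm of the difference of two pairs in `𝒦 = C[s0,r0] × ℳ`. -/
def pairNorm (s0 r0 : ℝ) (f1 f2 g1 g2 : ℝ → ℝ) : ℝ :=
  max (supOn (Set.Icc s0 r0) (f1 - g1)) (supOn (Set.Ici r0) (f2 - g2))

/-- Positivity assumptions on all the fixed constants and on `s0, r0`. -/
def PosC (c : Cst) (s0 r0 : ℝ) : Prop :=
  0 < c.a ∧ 0 < c.nu ∧ c.nu < 1 ∧ 2 < c.mu ∧ 0 < s0 ∧ s0 < r0 ∧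
  0 < c.D1 ∧ 0 < c.D2 ∧ 0 < c.Q ∧ 0 < c.D1s ∧ 0 < c.D2s ∧
  0 < c.L1m ∧ 0 < c.L1M ∧ 0 < c.N1m ∧ 0 < c.N1M ∧ 0 < c.K1m ∧ 0 < c.K1M ∧
  0 < c.L2m ∧ 0 < c.L2M ∧ 0 < c.N2m ∧ 0 < c.N2M ∧ 0 < c.K2m ∧ 0 < c.K2M ∧
  0 < c.Lt1 ∧ 0 < c.Nt1 ∧ 0 < c.Kt1 ∧ 0 < c.Lt2 ∧ 0 < c.Nt2 ∧ 0 < c.Kt2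

/-- Positivity assumptions on all the fixed constants (no `s0, r0`). -/
def PosCst (c : Cst) : Prop :=
  0 < c.a ∧ 0 < c.nu ∧ c.nu < 1 ∧ 2 < c.mu ∧
  0 < c.D1 ∧ 0 < c.D2 ∧ 0 < c.Q ∧ 0 < c.D1s ∧ 0 < c.D2s ∧
  0 < c.L1m ∧ 0 < c.L1M ∧ 0 < c.N1m ∧ 0 < c.N1M ∧ 0 < c.K1m ∧ 0 < c.K1M ∧
  0 < c.L2m ∧ 0 < c.L2M ∧ 0 < c.N2m ∧ 0 < c.N2M ∧ 0 < c.K2m ∧ 0 < c.K2M ∧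
  0 < c.Lt1 ∧ 0 < c.Nt1 ∧ 0 < c.Kt1 ∧ 0 < c.Lt2 ∧ 0 < c.Nt2 ∧ 0 < c.Kt2

/-- Assumptions (A1)–(A4): continuity of the images of `L, N, K`, the two-sided
bounds and the Lipschitz bounds. -/
def Assum (c : Cst) (s0 r0 : ℝ) (L1 N1 K1 L2 N2 K2 : (ℝ → ℝ) → ℝ → ℝ) : Prop :=
  (∀ f1 ∈ C1 s0 r0,
    ContinuousOn (L1 f1) (Set.Icc s0 r0) ∧ ContinuousOn (N1 f1) (Set.Icc s0 r0) ∧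
      ContinuousOn (K1 f1) (Set.Icc s0 r0)) ∧
  (∀ f2 ∈ Mset r0,
    ContinuousOn (L2 f2) (Set.Ici r0) ∧ ContinuousOn (N2 f2) (Set.Ici r0) ∧
      ContinuousOn (K2 f2) (Set.Ici r0)) ∧
  (∀ f1 ∈ C1 s0 r0, ∀ η ∈ Set.Icc s0 r0,
    c.L1m * η ^ c.mu ≤ L1 f1 η ∧ L1 f1 η ≤ c.L1M * η ^ c.mu ∧
    c.N1m * η ^ (-c.mu) ≤ N1 f1 η ∧ N1 f1 η ≤ c.N1M * η ^ (-c.mu) ∧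
    c.K1m * η ^ (-c.mu) ≤ K1 f1 η ∧ K1 f1 η ≤ c.K1M * η ^ (-c.mu)) ∧
  (∀ f2 ∈ Mset r0, ∀ η ∈ Set.Ici r0,
    c.L2m * η ^ c.mu ≤ L2 f2 η ∧ L2 f2 η ≤ c.L2M * η ^ c.mu ∧
    c.N2m * η ^ (-c.mu) ≤ N2 f2 η ∧ N2 f2 η ≤ c.N2M * η ^ (-c.mu) ∧
    c.K2m * η ^ (-c.mu) ≤ K2 f2 η ∧ K2 f2 η ≤ c.K2M * η ^ (-c.mu)) ∧
  (∀ f1 ∈ C1 s0 r0, ∀ g1 ∈ C1 s0 r0, ∀ η ∈ Set.Icc s0 r0,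
    |L1 f1 η - L1 g1 η| ≤ c.Lt1 * supOn (Set.Icc s0 r0) (f1 - g1) ∧
    |N1 f1 η - N1 g1 η| ≤ c.Nt1 * supOn (Set.Icc s0 r0) (f1 - g1) ∧
    |K1 f1 η - K1 g1 η| ≤ c.Kt1 * η ^ (-c.mu) * supOn (Set.Icc s0 r0) (f1 - g1)) ∧
  (∀ f2 ∈ Mset r0, ∀ g2 ∈ Mset r0, ∀ η ∈ Set.Ici r0,
    |L2 f2 η - L2 g2 η| ≤ c.Lt2 * supOn (Set.Ici r0) (f2 - g2) ∧
    |N2 f2 η - N2 g2 η| ≤ c.Nt2 * supOn (Set.Ici r0) (f2 - g2) ∧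
    |K2 f2 η - K2 g2 η| ≤ c.Kt2 * η ^ (-c.mu) * supOn (Set.Ici r0) (f2 - g2))

/-- `H(f1,f2) = ∫_{s0}^{r0} K(f1)(v)/v^ν dv + ∫_{r0}^{∞} K(f2)(v)/v^ν dv`. -/
def Hf (c : Cst) (s0 r0 : ℝ) (L1 N1 K1 L2 N2 K2 : (ℝ → ℝ) → ℝ → ℝ) (f1 f2 : ℝ → ℝ) : ℝ :=
  (∫ v in s0..r0, K1 f1 v / v ^ c.nu) + ∫ v in Set.Ioi r0, K2 f2 v / v ^ c.nu

/-- `E1(η; f1,f2)`. -/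
def E1f (c : Cst) (s0 r0 : ℝ) (L1 N1 K1 L2 N2 K2 : (ℝ → ℝ) → ℝ → ℝ) (f1 f2 : ℝ → ℝ)
    (η : ℝ) : ℝ :=
  Real.exp (-(∫ v in s0..η,
    (2 * c.a * v * (N1 f1 v / L1 f1 v)
      + c.D1 / Hf c s0 r0 L1 N1 K1 L2 N2 K2 f1 f2 * (K1 f1 v / (L1 f1 v * v ^ c.nu)))))

/-- `Φ1(η; f1,f2)`. -/
def Phi1f (c : Cst) (s0 r0 : ℝ) (L1 N1 K1 L2 N2 K2 : (ℝ → ℝ) → ℝ → ℝ) (f1 f2 : ℝ → ℝ)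
    (η : ℝ) : ℝ :=
  ∫ v in s0..η, E1f c s0 r0 L1 N1 K1 L2 N2 K2 f1 f2 v / (L1 f1 v * v ^ c.nu)

/-- `H1(η; f1,f2)`. -/
def H1f (c : Cst) (s0 r0 : ℝ) (L1 N1 K1 L2 N2 K2 : (ℝ → ℝ) → ℝ → ℝ) (f1 f2 : ℝ → ℝ)
    (η : ℝ) : ℝ :=
  ∫ v in s0..η, K1 f1 v / (v ^ c.nu * E1f c s0 r0 L1 N1 K1 L2 N2 K2 f1 f2 v)

/-- `G1(η; f1,f2)`. -/
def G1f (c : Cst) (s0 r0 : ℝ) (L1 N1 K1 L2 N2 K2 : (ℝ → ℝ) → ℝ → ℝ) (f1 f2 : ℝ → ℝ)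
    (η : ℝ) : ℝ :=
  ∫ v in s0..η, E1f c s0 r0 L1 N1 K1 L2 N2 K2 f1 f2 v
    * H1f c s0 r0 L1 N1 K1 L2 N2 K2 f1 f2 v / (L1 f1 v * v ^ c.nu)

/-- `V1(f1,f2)(η)`. -/
def V1f (c : Cst) (s0 r0 : ℝ) (L1 N1 K1 L2 N2 K2 : (ℝ → ℝ) → ℝ → ℝ) (f1 f2 : ℝ → ℝ)
    (η : ℝ) : ℝ :=
  s0 ^ c.nu * c.Q * Real.exp (-s0 ^ 2)
      * (Phi1f c s0 r0 L1 N1 K1 L2 N2 K2 f1 f2 r0 - Phi1f c s0 r0 L1 N1 K1 L2 N2 K2 f1 f2 η)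
    + c.D1s / Hf c s0 r0 L1 N1 K1 L2 N2 K2 f1 f2 ^ 2
      * (G1f c s0 r0 L1 N1 K1 L2 N2 K2 f1 f2 r0 - G1f c s0 r0 L1 N1 K1 L2 N2 K2 f1 f2 η)

/-- `E2(η; f1,f2)`. -/
def E2f (c : Cst) (s0 r0 : ℝ) (L1 N1 K1 L2 N2 K2 : (ℝ → ℝ) → ℝ → ℝ) (f1 f2 : ℝ → ℝ)
    (η : ℝ) : ℝ :=
  Real.exp (-(∫ v in r0..η,
    (2 * c.a * v * (N2 f2 v / L2 f2 v)
      + c.D2 / Hf c s0 r0 L1 N1 K1 L2 N2 K2 f1 f2 * (K2 f2 v / (L2 f2 v * v ^ c.nu)))))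

/-- `Φ2(η; f1,f2)`. -/
def Phi2f (c : Cst) (s0 r0 : ℝ) (L1 N1 K1 L2 N2 K2 : (ℝ → ℝ) → ℝ → ℝ) (f1 f2 : ℝ → ℝ)
    (η : ℝ) : ℝ :=
  ∫ v in r0..η, E2f c s0 r0 L1 N1 K1 L2 N2 K2 f1 f2 v / (L2 f2 v * v ^ c.nu)

/-- `Φ2(∞; f1,f2)`. -/
def Phi2I (c : Cst) (s0 r0 : ℝ) (L1 N1 K1 L2 N2 K2 : (ℝ → ℝ) → ℝ → ℝ) (f1 f2 : ℝ → ℝ) : ℝ :=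
  ∫ v in Set.Ioi r0, E2f c s0 r0 L1 N1 K1 L2 N2 K2 f1 f2 v / (L2 f2 v * v ^ c.nu)

/-- `H2(η; f1,f2)`. -/
def H2f (c : Cst) (s0 r0 : ℝ) (L1 N1 K1 L2 N2 K2 : (ℝ → ℝ) → ℝ → ℝ) (f1 f2 : ℝ → ℝ)
    (η : ℝ) : ℝ :=
  ∫ v in r0..η, K2 f2 v / (v ^ c.nu * E2f c s0 r0 L1 N1 K1 L2 N2 K2 f1 f2 v)

/-- `G2(η; f1,f2)`. -/
def G2f (c : Cst) (s0 r0 : ℝ) (L1 N1 K1 L2 N2 K2 : (ℝ → ℝ) → ℝ → ℝ) (f1 f2 : ℝ → ℝ)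
    (η : ℝ) : ℝ :=
  ∫ v in r0..η, E2f c s0 r0 L1 N1 K1 L2 N2 K2 f1 f2 v
    * H2f c s0 r0 L1 N1 K1 L2 N2 K2 f1 f2 v / (L2 f2 v * v ^ c.nu)

/-- `G2(∞; f1,f2) = lim_{η→∞} G2(η; f1,f2)`. -/
def G2I (c : Cst) (s0 r0 : ℝ) (L1 N1 K1 L2 N2 K2 : (ℝ → ℝ) → ℝ → ℝ) (f1 f2 : ℝ → ℝ) : ℝ :=
  limUnder atTop (G2f c s0 r0 L1 N1 K1 L2 N2 K2 f1 f2)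

/-- `V2(f1,f2)(η)`. -/
def V2f (c : Cst) (s0 r0 : ℝ) (L1 N1 K1 L2 N2 K2 : (ℝ → ℝ) → ℝ → ℝ) (f1 f2 : ℝ → ℝ)
    (η : ℝ) : ℝ :=
  (c.D2s / Hf c s0 r0 L1 N1 K1 L2 N2 K2 f1 f2 ^ 2 * G2I c s0 r0 L1 N1 K1 L2 N2 K2 f1 f2 - 1)
      * (Phi2f c s0 r0 L1 N1 K1 L2 N2 K2 f1 f2 η / Phi2I c s0 r0 L1 N1 K1 L2 N2 K2 f1 f2)
    - c.D2s / Hf c s0 r0 L1 N1 K1 L2 N2 K2 f1 f2 ^ 2 * G2f c s0 r0 L1 N1 K1 L2 N2 K2 f1 f2 η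

/-! Constants appearing in the estimates. -/

def Hinf (c : Cst) (s0 r0 : ℝ) : ℝ :=
  c.K1m / (c.mu + c.nu - 1) * (s0 ^ (-(c.mu + c.nu - 1)) - r0 ^ (-(c.mu + c.nu - 1)))

def Hsup (c : Cst) (s0 r0 : ℝ) : ℝ :=
  (c.K1M * s0 ^ (-(c.mu + c.nu - 1)) + c.K2M * r0 ^ (-(c.mu + c.nu - 1))) / (c.mu + c.nu - 1)

def Htil (c : Cst) (s0 r0 : ℝ) : ℝ :=
  (c.Kt1 * s0 ^ (-(c.mu + c.nu - 1)) + c.Kt2 * r0 ^ (-(c.mu + c.nu - 1))) / (c.mu + c.nu - 1)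

/-- Limit of `Hinf` as `r0 → ∞`. -/
def HinfI (c : Cst) (s0 : ℝ) : ℝ := c.K1m / (c.mu + c.nu - 1) * s0 ^ (-(c.mu + c.nu - 1))

/-- Limit of `Hsup` as `r0 → ∞`. -/
def HsupI (c : Cst) (s0 : ℝ) : ℝ := c.K1M * s0 ^ (-(c.mu + c.nu - 1)) / (c.mu + c.nu - 1)

/-- Limit of `Htil` as `r0 → ∞`. -/
def HtilI (c : Cst) (s0 : ℝ) : ℝ := c.Kt1 * s0 ^ (-(c.mu + c.nu - 1)) / (c.mu + c.nu - 1)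

/-- `E1inf` as a function of the value `h` of `Hinf`. -/
def E1infG (c : Cst) (s0 h : ℝ) : ℝ :=
  Real.exp (-(c.a * c.N1M / (c.L1m * (c.mu - 1) * s0 ^ (2 * c.mu - 2))
    + c.D1 * c.K1M / (h * c.L1m * (2 * c.mu + c.nu - 1) * s0 ^ (2 * c.mu + c.nu - 1))))

/-- `Ẽ1` as a function of the values `h` of `Hinf` and `ht` of `Htil`. -/
def E1tilG (c : Cst) (s0 h ht : ℝ) : ℝ :=
  2 * c.a * (c.Nt1 / (c.L1m * (c.mu - 2) * s0 ^ (c.mu - 2))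
      + c.N1M * c.Lt1 / (c.L1m ^ 2 * (3 * c.mu - 2) * s0 ^ (3 * c.mu - 2)))
    + c.D1 * (c.Kt1 / (h * c.L1m * (2 * c.mu + c.nu - 1) * s0 ^ (2 * c.mu + c.nu - 1))
      + c.K1M / (h * c.L1m)
        * (ht / (h * (2 * c.mu + c.nu - 1) * s0 ^ (2 * c.mu + c.nu - 1))
          + c.Lt1 / (c.L1m * (3 * c.mu + c.nu - 1) * s0 ^ (3 * c.mu + c.nu - 1))))

def Phi1tilG (c : Cst) (s0 h ht : ℝ) : ℝ :=
  E1tilG c s0 h ht / (c.L1m * (c.mu + c.nu - 1) * s0 ^ (c.mu + c.nu - 1))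
    + c.Lt1 / (c.L1m ^ 2 * (2 * c.mu + c.nu - 1) * s0 ^ (2 * c.mu + c.nu - 1))

def H1supG (c : Cst) (s0 h : ℝ) : ℝ :=
  c.K1M / (E1infG c s0 h * (c.mu + c.nu - 1) * s0 ^ (c.mu + c.nu - 1))

def H1tilG (c : Cst) (s0 h ht : ℝ) : ℝ :=
  (c.Kt1 + c.K1M * E1tilG c s0 h ht / E1infG c s0 h)
    / (E1infG c s0 h * (c.mu + c.nu - 1) * s0 ^ (c.mu + c.nu - 1))

def G1supG (c : Cst) (s0 h : ℝ) : ℝ :=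
  H1supG c s0 h / (c.L1m * (c.mu + c.nu - 1) * s0 ^ (c.mu + c.nu - 1))

def G1tilG (c : Cst) (s0 h ht : ℝ) : ℝ :=
  H1supG c s0 h * Phi1tilG c s0 h ht
    + H1tilG c s0 h ht / (c.L1m * (c.mu + c.nu - 1) * s0 ^ (c.mu + c.nu - 1))

/-- `ε1` as a function of the values `h` of `Hinf`, `hs` of `Hsup`, `ht` of `Htil`. -/
def eps1G (c : Cst) (s0 h hs ht : ℝ) : ℝ :=
  2 * s0 ^ c.nu * c.Q * Real.exp (-s0 ^ 2) * Phi1tilG c s0 h ht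
    + 2 * c.D1s * (2 * G1supG c s0 h * hs * ht / h ^ 4 + G1tilG c s0 h ht / h ^ 2)

def E1inf (c : Cst) (s0 r0 : ℝ) : ℝ := E1infG c s0 (Hinf c s0 r0)
def E1til (c : Cst) (s0 r0 : ℝ) : ℝ := E1tilG c s0 (Hinf c s0 r0) (Htil c s0 r0)
def Phi1til (c : Cst) (s0 r0 : ℝ) : ℝ := Phi1tilG c s0 (Hinf c s0 r0) (Htil c s0 r0)
def H1sup (c : Cst) (s0 r0 : ℝ) : ℝ := H1supG c s0 (Hinf c s0 r0)
def H1til (c : Cst) (s0 r0 : ℝ) : ℝ := H1tilG c s0 (Hinf c s0 r0) (Htil c s0 r0)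
def G1sup (c : Cst) (s0 r0 : ℝ) : ℝ := G1supG c s0 (Hinf c s0 r0)
def G1til (c : Cst) (s0 r0 : ℝ) : ℝ := G1tilG c s0 (Hinf c s0 r0) (Htil c s0 r0)
def eps1 (c : Cst) (s0 r0 : ℝ) : ℝ := eps1G c s0 (Hinf c s0 r0) (Hsup c s0 r0) (Htil c s0 r0)

/-- `j1(s0) = lim_{r0→∞} ε1(r0,s0)`: the same expression with `Hinf, Hsup, Htil`
replaced by their limits as `r0 → ∞`. -/
def j1 (c : Cst) (s0 : ℝ) : ℝ := eps1G c s0 (HinfI c s0) (HsupI c s0) (HtilI c s0)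

def E2inf (c : Cst) (s0 r0 : ℝ) : ℝ :=
  Real.exp (-(c.a * c.N2M / (c.L2m * (c.mu - 1) * r0 ^ (2 * c.mu - 2))
    + c.D2 * c.K2M / (Hinf c s0 r0 * c.L2m * (2 * c.mu + c.nu - 1) * r0 ^ (2 * c.mu + c.nu - 1))))

def E2til (c : Cst) (s0 r0 : ℝ) : ℝ :=
  2 * c.a * (c.Nt2 / (c.L2m * (c.mu - 2) * r0 ^ (c.mu - 2))
      + c.N2M * c.Lt2 / (c.L2m ^ 2 * (3 * c.mu - 2) * r0 ^ (3 * c.mu - 2)))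
    + c.D2 * (c.Kt2 / (Hinf c s0 r0 * c.L2m * (2 * c.mu + c.nu - 1) * r0 ^ (2 * c.mu + c.nu - 1))
      + c.K2M / (Hinf c s0 r0 * c.L2m)
        * (Htil c s0 r0 / (Hinf c s0 r0 * (2 * c.mu + c.nu - 1) * r0 ^ (2 * c.mu + c.nu - 1))
          + c.Lt2 / (c.L2m * (3 * c.mu + c.nu - 1) * r0 ^ (3 * c.mu + c.nu - 1))))

def Phi2til (c : Cst) (s0 r0 : ℝ) : ℝ :=
  E2til c s0 r0 / (c.L2m * (c.mu + c.nu - 1) * r0 ^ (c.mu + c.nu - 1))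
    + c.Lt2 / (c.L2m ^ 2 * (2 * c.mu + c.nu - 1) * r0 ^ (2 * c.mu + c.nu - 1))

/-- `Φ2inf(∞)(r0,s0)`. -/
def Phi2infC (c : Cst) (s0 r0 : ℝ) : ℝ :=
  E2inf c s0 r0 / (c.L2M * (c.mu + c.nu - 1) * r0 ^ (c.mu + c.nu - 1))

/-- `Φ2sup(r0)`. -/
def Phi2supC (c : Cst) (r0 : ℝ) : ℝ := 1 / (c.L2m * (c.mu + c.nu - 1) * r0 ^ (c.mu + c.nu - 1))

def H2sup (c : Cst) (s0 r0 : ℝ) : ℝ :=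
  c.K2M / (E2inf c s0 r0 * (c.mu + c.nu - 1) * r0 ^ (c.mu + c.nu - 1))

def H2til (c : Cst) (s0 r0 : ℝ) : ℝ :=
  (c.Kt2 + c.K2M * E2til c s0 r0 / E2inf c s0 r0)
    / (E2inf c s0 r0 * (c.mu + c.nu - 1) * r0 ^ (c.mu + c.nu - 1))

def G2sup (c : Cst) (s0 r0 : ℝ) : ℝ :=
  H2sup c s0 r0 / (c.L2m * (c.mu + c.nu - 1) * r0 ^ (c.mu + c.nu - 1))

def G2til (c : Cst) (s0 r0 : ℝ) : ℝ :=
  H2sup c s0 r0 * Phi2til c s0 r0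
    + H2til c s0 r0 / (c.L2m * (c.mu + c.nu - 1) * r0 ^ (c.mu + c.nu - 1))

def eps21 (c : Cst) (s0 r0 : ℝ) : ℝ := 2 * Phi2til c s0 r0 / Phi2infC c s0 r0

def eps22 (c : Cst) (s0 r0 : ℝ) : ℝ :=
  G2til c s0 r0 / Hinf c s0 r0 ^ 2
    + 2 * G2sup c s0 r0 * Hsup c s0 r0 * Htil c s0 r0 / Hinf c s0 r0 ^ 4

def eps23 (c : Cst) (s0 r0 : ℝ) : ℝ :=
  Phi2supC c r0 / Phi2infC c s0 r0 * eps22 c s0 r0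
    + G2sup c s0 r0 / Hinf c s0 r0 ^ 2 * eps21 c s0 r0

def eps2 (c : Cst) (s0 r0 : ℝ) : ℝ := eps21 c s0 r0 + eps22 c s0 r0 + eps23 c s0 r0


namespace Stmt18Helpers

variable {c : Cst} {s0 x y : ℝ}

lemma consts (hp : PosCst c) :
    0 < c.a ∧ 0 < c.D2 ∧ 0 < c.L2m ∧ 0 < c.L2M ∧ 0 < c.N2M ∧ 0 < c.K2M ∧ 0 < c.K1m ∧
    0 < c.K1M ∧ 0 < c.Kt1 ∧ 0 < c.Kt2 ∧ 0 < c.Lt2 ∧ 0 < c.Nt2 ∧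
    0 < c.mu - 1 ∧ 0 < c.mu - 2 ∧ 0 < 2*c.mu - 2 ∧ 0 < 3*c.mu - 2 ∧
    0 < c.mu + c.nu - 1 ∧ 0 < 2*c.mu + c.nu - 1 ∧ 0 < 3*c.mu + c.nu - 1 ∧ 0 < c.mu := by
  obtain ⟨ha, hnu, hnu1, hmu, hD1, hD2, hQ, hD1s, hD2s, hL1m, hL1M, hN1m, hN1M, hK1m, hK1M,
    hL2m, hL2M, hN2m, hN2M, hK2m, hK2M, hLt1, hNt1, hKt1, hLt2, hNt2, hKt2⟩ := hp
  refine ⟨ha, hD2, hL2m, hL2M, hN2M, hK2M, hK1m, hK1M, hKt1, hKt2, hLt2, hNt2,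
    ?_, ?_, ?_, ?_, ?_, ?_, ?_, ?_⟩ <;> linarith

lemma rpow_anti (hx : 0 < x) (hxy : x ≤ y) {e : ℝ} (he : 0 < e) : y ^ (-e) ≤ x ^ (-e) :=
  Real.rpow_le_rpow_of_nonpos hx hxy (by linarith)

lemma Hinf_pos (hp : PosCst c) (hs0 : 0 < s0) (hx : s0 < x) : 0 < Hinf c s0 x := by
  obtain ⟨ha, hD2, hL2m, hL2M, hN2M, hK2M, hK1m, hK1M, hKt1, hKt2, hLt2, hNt2,
    hm1, hm2, h2m2, h3m2, hk, hk2, hk3, hmu⟩ := consts hp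
  have h1 : x ^ (-(c.mu + c.nu - 1)) < s0 ^ (-(c.mu + c.nu - 1)) :=
    Real.rpow_lt_rpow_of_neg hs0 hx (by linarith)
  unfold Hinf
  have : 0 < s0 ^ (-(c.mu + c.nu - 1)) - x ^ (-(c.mu + c.nu - 1)) := by linarith
  positivity

lemma Hinf_le (hp : PosCst c) (hs0 : 0 < s0) (hx : s0 < x) (hxy : x ≤ y) :
    Hinf c s0 x ≤ Hinf c s0 y := by
  obtain ⟨ha, hD2, hL2m, hL2M, hN2M, hK2M, hK1m, hK1M, hKt1, hKt2, hLt2, hNt2,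
    hm1, hm2, h2m2, h3m2, hk, hk2, hk3, hmu⟩ := consts hp
  have h1 : y ^ (-(c.mu + c.nu - 1)) ≤ x ^ (-(c.mu + c.nu - 1)) :=
    rpow_anti (hs0.trans hx) hxy hk
  unfold Hinf
  gcongr

lemma Hsup_pos (hp : PosCst c) (hs0 : 0 < s0) (hx : 0 < x) : 0 < Hsup c s0 x := by
  obtain ⟨ha, hD2, hL2m, hL2M, hN2M, hK2M, hK1m, hK1M, hKt1, hKt2, hLt2, hNt2,
    hm1, hm2, h2m2, h3m2, hk, hk2, hk3, hmu⟩ := consts hp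
  unfold Hsup; positivity

lemma Hsup_le (hp : PosCst c) (hs0 : 0 < s0) (hx : 0 < x) (hxy : x ≤ y) :
    Hsup c s0 y ≤ Hsup c s0 x := by
  obtain ⟨ha, hD2, hL2m, hL2M, hN2M, hK2M, hK1m, hK1M, hKt1, hKt2, hLt2, hNt2,
    hm1, hm2, h2m2, h3m2, hk, hk2, hk3, hmu⟩ := consts hp
  have h1 : y ^ (-(c.mu + c.nu - 1)) ≤ x ^ (-(c.mu + c.nu - 1)) := rpow_anti hx hxy hk
  unfold Hsup
  gcongr

lemma Htil_pos (hp : PosCst c) (hs0 : 0 < s0) (hx : 0 < x) : 0 < Htil c s0 x := by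
  obtain ⟨ha, hD2, hL2m, hL2M, hN2M, hK2M, hK1m, hK1M, hKt1, hKt2, hLt2, hNt2,
    hm1, hm2, h2m2, h3m2, hk, hk2, hk3, hmu⟩ := consts hp
  unfold Htil; positivity

lemma Htil_le (hp : PosCst c) (hs0 : 0 < s0) (hx : 0 < x) (hxy : x ≤ y) :
    Htil c s0 y ≤ Htil c s0 x := by
  obtain ⟨ha, hD2, hL2m, hL2M, hN2M, hK2M, hK1m, hK1M, hKt1, hKt2, hLt2, hNt2,
    hm1, hm2, h2m2, h3m2, hk, hk2, hk3, hmu⟩ := consts hp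
  have h1 : y ^ (-(c.mu + c.nu - 1)) ≤ x ^ (-(c.mu + c.nu - 1)) := rpow_anti hx hxy hk
  unfold Htil
  gcongr

lemma E2inf_pos : 0 < E2inf c s0 x := Real.exp_pos _

lemma E2inf_le (hp : PosCst c) (hs0 : 0 < s0) (hx : s0 < x) (hxy : x ≤ y) :
    E2inf c s0 x ≤ E2inf c s0 y := by
  obtain ⟨ha, hD2, hL2m, hL2M, hN2M, hK2M, hK1m, hK1M, hKt1, hKt2, hLt2, hNt2,
    hm1, hm2, h2m2, h3m2, hk, hk2, hk3, hmu⟩ := consts hp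
  have hx0 : 0 < x := hs0.trans hx
  have hHx := Hinf_pos hp hs0 hx
  have hH := Hinf_le hp hs0 hx hxy
  have hHy := Hinf_pos hp hs0 (hx.trans_le hxy)
  unfold E2inf
  rw [Real.exp_le_exp]
  apply neg_le_neg
  gcongr

lemma E2til_pos (hp : PosCst c) (hs0 : 0 < s0) (hx : s0 < x) : 0 < E2til c s0 x := by
  obtain ⟨ha, hD2, hL2m, hL2M, hN2M, hK2M, hK1m, hK1M, hKt1, hKt2, hLt2, hNt2,
    hm1, hm2, h2m2, h3m2, hk, hk2, hk3, hmu⟩ := consts hp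
  have hx0 : 0 < x := hs0.trans hx
  have hHx := Hinf_pos hp hs0 hx
  have hTx := Htil_pos hp hs0 hx0
  unfold E2til; positivity

lemma E2til_le (hp : PosCst c) (hs0 : 0 < s0) (hx : s0 < x) (hxy : x ≤ y) :
    E2til c s0 y ≤ E2til c s0 x := by
  obtain ⟨ha, hD2, hL2m, hL2M, hN2M, hK2M, hK1m, hK1M, hKt1, hKt2, hLt2, hNt2,
    hm1, hm2, h2m2, h3m2, hk, hk2, hk3, hmu⟩ := consts hp
  have hx0 : 0 < x := hs0.trans hx
  have hHx := Hinf_pos hp hs0 hx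
  have hHy := Hinf_pos hp hs0 (hx.trans_le hxy)
  have hH := Hinf_le hp hs0 hx hxy
  have hTx := Htil_pos hp hs0 hx0
  have hTy := Htil_pos hp hs0 (hx0.trans_le hxy)
  have hT := Htil_le hp hs0 hx0 hxy
  have hy0 : 0 < y := hx0.trans_le hxy
  unfold E2til
  gcongr <;> positivity

lemma Phi2til_pos (hp : PosCst c) (hs0 : 0 < s0) (hx : s0 < x) : 0 < Phi2til c s0 x := by
  obtain ⟨ha, hD2, hL2m, hL2M, hN2M, hK2M, hK1m, hK1M, hKt1, hKt2, hLt2, hNt2,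
    hm1, hm2, h2m2, h3m2, hk, hk2, hk3, hmu⟩ := consts hp
  have hx0 : 0 < x := hs0.trans hx
  have hEt := E2til_pos hp hs0 hx
  unfold Phi2til; positivity

lemma Phi2til_le (hp : PosCst c) (hs0 : 0 < s0) (hx : s0 < x) (hxy : x ≤ y) :
    Phi2til c s0 y ≤ Phi2til c s0 x := by
  obtain ⟨ha, hD2, hL2m, hL2M, hN2M, hK2M, hK1m, hK1M, hKt1, hKt2, hLt2, hNt2,
    hm1, hm2, h2m2, h3m2, hk, hk2, hk3, hmu⟩ := consts hp
  have hx0 : 0 < x := hs0.trans hx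
  have hEt := E2til_le hp hs0 hx hxy
  have hEty := E2til_pos hp hs0 (hx.trans_le hxy)
  have hEtx := E2til_pos hp hs0 hx
  have hy0 : 0 < y := hx0.trans_le hxy
  unfold Phi2til
  gcongr <;> positivity

lemma Phi2infC_pos (hp : PosCst c) (hs0 : 0 < s0) (hx : 0 < x) : 0 < Phi2infC c s0 x := by
  obtain ⟨ha, hD2, hL2m, hL2M, hN2M, hK2M, hK1m, hK1M, hKt1, hKt2, hLt2, hNt2,
    hm1, hm2, h2m2, h3m2, hk, hk2, hk3, hmu⟩ := consts hp
  have hE : 0 < E2inf c s0 x := E2inf_pos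
  unfold Phi2infC; positivity

lemma H2sup_pos (hp : PosCst c) (hs0 : 0 < s0) (hx : 0 < x) : 0 < H2sup c s0 x := by
  obtain ⟨ha, hD2, hL2m, hL2M, hN2M, hK2M, hK1m, hK1M, hKt1, hKt2, hLt2, hNt2,
    hm1, hm2, h2m2, h3m2, hk, hk2, hk3, hmu⟩ := consts hp
  have hE : 0 < E2inf c s0 x := E2inf_pos
  unfold H2sup; positivity

lemma H2sup_le (hp : PosCst c) (hs0 : 0 < s0) (hx : s0 < x) (hxy : x ≤ y) :
    H2sup c s0 y ≤ H2sup c s0 x := by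
  obtain ⟨ha, hD2, hL2m, hL2M, hN2M, hK2M, hK1m, hK1M, hKt1, hKt2, hLt2, hNt2,
    hm1, hm2, h2m2, h3m2, hk, hk2, hk3, hmu⟩ := consts hp
  have hx0 : 0 < x := hs0.trans hx
  have hEx : 0 < E2inf c s0 x := E2inf_pos
  have hE := E2inf_le hp hs0 hx hxy
  have hEy : 0 < E2inf c s0 y := E2inf_pos
  have hy0 : 0 < y := hx0.trans_le hxy
  unfold H2sup
  gcongr <;> positivity

lemma H2til_pos (hp : PosCst c) (hs0 : 0 < s0) (hx : s0 < x) : 0 < H2til c s0 x := by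
  obtain ⟨ha, hD2, hL2m, hL2M, hN2M, hK2M, hK1m, hK1M, hKt1, hKt2, hLt2, hNt2,
    hm1, hm2, h2m2, h3m2, hk, hk2, hk3, hmu⟩ := consts hp
  have hx0 : 0 < x := hs0.trans hx
  have hE : 0 < E2inf c s0 x := E2inf_pos
  have hEt := E2til_pos hp hs0 hx
  unfold H2til; positivity

lemma H2til_le (hp : PosCst c) (hs0 : 0 < s0) (hx : s0 < x) (hxy : x ≤ y) :
    H2til c s0 y ≤ H2til c s0 x := by
  obtain ⟨ha, hD2, hL2m, hL2M, hN2M, hK2M, hK1m, hK1M, hKt1, hKt2, hLt2, hNt2,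
    hm1, hm2, h2m2, h3m2, hk, hk2, hk3, hmu⟩ := consts hp
  have hx0 : 0 < x := hs0.trans hx
  have hEx : 0 < E2inf c s0 x := E2inf_pos
  have hEy : 0 < E2inf c s0 y := E2inf_pos
  have hE := E2inf_le hp hs0 hx hxy
  have hEt := E2til_le hp hs0 hx hxy
  have hEty := E2til_pos hp hs0 (hx.trans_le hxy)
  have hEtx := E2til_pos hp hs0 hx
  have hy0 : 0 < y := hx0.trans_le hxy
  unfold H2til
  gcongr <;> positivity

lemma G2sup_pos (hp : PosCst c) (hs0 : 0 < s0) (hx : 0 < x) : 0 < G2sup c s0 x := by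
  obtain ⟨ha, hD2, hL2m, hL2M, hN2M, hK2M, hK1m, hK1M, hKt1, hKt2, hLt2, hNt2,
    hm1, hm2, h2m2, h3m2, hk, hk2, hk3, hmu⟩ := consts hp
  have h2 := H2sup_pos hp hs0 hx
  unfold G2sup; positivity

lemma G2sup_le (hp : PosCst c) (hs0 : 0 < s0) (hx : s0 < x) (hxy : x ≤ y) :
    G2sup c s0 y ≤ G2sup c s0 x := by
  obtain ⟨ha, hD2, hL2m, hL2M, hN2M, hK2M, hK1m, hK1M, hKt1, hKt2, hLt2, hNt2,
    hm1, hm2, h2m2, h3m2, hk, hk2, hk3, hmu⟩ := consts hp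
  have hx0 : 0 < x := hs0.trans hx
  have h2 := H2sup_le hp hs0 hx hxy
  have h2y := H2sup_pos hp hs0 (hx0.trans_le hxy)
  have h2x := H2sup_pos hp hs0 hx0
  have hy0 : 0 < y := hx0.trans_le hxy
  unfold G2sup
  gcongr <;> positivity

lemma G2til_pos (hp : PosCst c) (hs0 : 0 < s0) (hx : s0 < x) : 0 < G2til c s0 x := by
  obtain ⟨ha, hD2, hL2m, hL2M, hN2M, hK2M, hK1m, hK1M, hKt1, hKt2, hLt2, hNt2,
    hm1, hm2, h2m2, h3m2, hk, hk2, hk3, hmu⟩ := consts hp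
  have hx0 : 0 < x := hs0.trans hx
  have h1 := H2sup_pos hp hs0 hx0
  have h2 := Phi2til_pos hp hs0 hx
  have h3 := H2til_pos hp hs0 hx
  unfold G2til; positivity

lemma G2til_le (hp : PosCst c) (hs0 : 0 < s0) (hx : s0 < x) (hxy : x ≤ y) :
    G2til c s0 y ≤ G2til c s0 x := by
  obtain ⟨ha, hD2, hL2m, hL2M, hN2M, hK2M, hK1m, hK1M, hKt1, hKt2, hLt2, hNt2,
    hm1, hm2, h2m2, h3m2, hk, hk2, hk3, hmu⟩ := consts hp
  have hx0 : 0 < x := hs0.trans hx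
  have h1 := H2sup_le hp hs0 hx hxy
  have h1y := H2sup_pos hp hs0 (hx0.trans_le hxy)
  have h2 := Phi2til_le hp hs0 hx hxy
  have h2y := (Phi2til_pos hp hs0 (hx.trans_le hxy)).le
  have h3 := H2til_le hp hs0 hx hxy
  have h3y := H2til_pos hp hs0 (hx.trans_le hxy)
  have h3x := H2til_pos hp hs0 hx
  have h1x := H2sup_pos hp hs0 hx0
  have hy0 : 0 < y := hx0.trans_le hxy
  unfold G2til
  gcongr <;> positivity

lemma eps22_pos (hp : PosCst c) (hs0 : 0 < s0) (hx : s0 < x) : 0 < eps22 c s0 x := by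
  obtain ⟨ha, hD2, hL2m, hL2M, hN2M, hK2M, hK1m, hK1M, hKt1, hKt2, hLt2, hNt2,
    hm1, hm2, h2m2, h3m2, hk, hk2, hk3, hmu⟩ := consts hp
  have hx0 : 0 < x := hs0.trans hx
  have h1 := G2til_pos hp hs0 hx
  have h2 := G2sup_pos hp hs0 hx0
  have h3 := Hsup_pos hp hs0 hx0
  have h4 := Htil_pos hp hs0 hx0
  have h5 := Hinf_pos hp hs0 hx
  unfold eps22; positivity

lemma eps22_le (hp : PosCst c) (hs0 : 0 < s0) (hx : s0 < x) (hxy : x ≤ y) :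
    eps22 c s0 y ≤ eps22 c s0 x := by
  obtain ⟨ha, hD2, hL2m, hL2M, hN2M, hK2M, hK1m, hK1M, hKt1, hKt2, hLt2, hNt2,
    hm1, hm2, h2m2, h3m2, hk, hk2, hk3, hmu⟩ := consts hp
  have hx0 : 0 < x := hs0.trans hx
  have hy0 : 0 < y := hx0.trans_le hxy
  have hH := Hinf_le hp hs0 hx hxy
  have hHx := Hinf_pos hp hs0 hx
  have h1 := G2til_le hp hs0 hx hxy
  have h1y := (G2til_pos hp hs0 (hx.trans_le hxy)).le
  have h2 := G2sup_le hp hs0 hx hxy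
  have h2y := (G2sup_pos hp hs0 hy0).le
  have h3 := Hsup_le hp hs0 hx0 hxy
  have h3y := (Hsup_pos hp hs0 hy0).le
  have h4 := Htil_le hp hs0 hx0 hxy
  have h4y := (Htil_pos hp hs0 hy0).le
  have hHy := Hinf_pos hp hs0 (hx.trans_le hxy)
  have h1x := (G2til_pos hp hs0 hx).le
  have h2x := (G2sup_pos hp hs0 hx0).le
  have h3x := (Hsup_pos hp hs0 hx0).le
  have h4x := (Htil_pos hp hs0 hx0).le
  unfold eps22
  gcongr <;> positivity

lemma eps21_eq (hp : PosCst c) (hs0 : 0 < s0) (hx : s0 < x) :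
    eps21 c s0 x = 2 * (c.L2M / c.L2m) * (E2til c s0 x / E2inf c s0 x)
      + 2 * c.L2M * c.Lt2 * (c.mu + c.nu - 1) / (c.L2m ^ 2 * (2 * c.mu + c.nu - 1))
        * (x ^ (-c.mu) / E2inf c s0 x) := by
  obtain ⟨ha, hD2, hL2m, hL2M, hN2M, hK2M, hK1m, hK1M, hKt1, hKt2, hLt2, hNt2,
    hm1, hm2, h2m2, h3m2, hk, hk2, hk3, hmu⟩ := consts hp
  have hx0 : 0 < x := hs0.trans hx
  have hE : 0 < E2inf c s0 x := E2inf_pos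
  have hxk : (0:ℝ) < x ^ (c.mu + c.nu - 1) := Real.rpow_pos_of_pos hx0 _
  have hxk2 : (0:ℝ) < x ^ (2 * c.mu + c.nu - 1) := Real.rpow_pos_of_pos hx0 _
  have hsplit : x ^ (-c.mu) = x ^ (c.mu + c.nu - 1) / x ^ (2 * c.mu + c.nu - 1) := by
    rw [← Real.rpow_sub hx0]; congr 1; ring
  unfold eps21 Phi2til Phi2infC
  rw [hsplit]
  field_simp

lemma ratio_eq (hp : PosCst c) (hs0 : 0 < s0) (hx : 0 < x) :
    Phi2supC c x / Phi2infC c s0 x = c.L2M / (c.L2m * E2inf c s0 x) := by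
  obtain ⟨ha, hD2, hL2m, hL2M, hN2M, hK2M, hK1m, hK1M, hKt1, hKt2, hLt2, hNt2,
    hm1, hm2, h2m2, h3m2, hk, hk2, hk3, hmu⟩ := consts hp
  have hE : 0 < E2inf c s0 x := E2inf_pos
  have hxk : (0:ℝ) < x ^ (c.mu + c.nu - 1) := Real.rpow_pos_of_pos hx _
  unfold Phi2supC Phi2infC
  field_simp

lemma eps21_pos (hp : PosCst c) (hs0 : 0 < s0) (hx : s0 < x) : 0 < eps21 c s0 x := by
  obtain ⟨ha, hD2, hL2m, hL2M, hN2M, hK2M, hK1m, hK1M, hKt1, hKt2, hLt2, hNt2,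
    hm1, hm2, h2m2, h3m2, hk, hk2, hk3, hmu⟩ := consts hp
  have h1 := Phi2til_pos hp hs0 hx
  have h2 := Phi2infC_pos hp hs0 (hs0.trans hx)
  unfold eps21; positivity

lemma eps21_lt (hp : PosCst c) (hs0 : 0 < s0) (hx : s0 < x) (hxy : x < y) :
    eps21 c s0 y < eps21 c s0 x := by
  obtain ⟨ha, hD2, hL2m, hL2M, hN2M, hK2M, hK1m, hK1M, hKt1, hKt2, hLt2, hNt2,
    hm1, hm2, h2m2, h3m2, hk, hk2, hk3, hmu⟩ := consts hp
  have hx0 : 0 < x := hs0.trans hx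
  have hy0 : 0 < y := hx0.trans hxy
  have hEx : 0 < E2inf c s0 x := E2inf_pos
  have hEy : 0 < E2inf c s0 y := E2inf_pos
  have hE := E2inf_le hp hs0 hx hxy.le
  have hEt := E2til_le hp hs0 hx hxy.le
  have hEty := (E2til_pos hp hs0 (hx.trans hxy)).le
  have hEtx := E2til_pos hp hs0 hx
  rw [eps21_eq hp hs0 hx, eps21_eq hp hs0 (hx.trans hxy)]
  have hpow : y ^ (-c.mu) < x ^ (-c.mu) := Real.rpow_lt_rpow_of_neg hx0 hxy (by linarith)
  have h1 : 2 * (c.L2M / c.L2m) * (E2til c s0 y / E2inf c s0 y)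
      ≤ 2 * (c.L2M / c.L2m) * (E2til c s0 x / E2inf c s0 x) := by gcongr <;> positivity
  have hyp : (0:ℝ) < y ^ (-c.mu) := Real.rpow_pos_of_pos hy0 _
  have h2 : y ^ (-c.mu) / E2inf c s0 y < x ^ (-c.mu) / E2inf c s0 x := by
    calc y ^ (-c.mu) / E2inf c s0 y ≤ y ^ (-c.mu) / E2inf c s0 x := by
          gcongr <;> positivity
      _ < x ^ (-c.mu) / E2inf c s0 x := by
          exact (div_lt_div_iff_of_pos_right hEx).mpr hpow
  have h3 : 0 < 2 * c.L2M * c.Lt2 * (c.mu + c.nu - 1) / (c.L2m ^ 2 * (2 * c.mu + c.nu - 1)) := by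
    positivity
  nlinarith [mul_lt_mul_of_pos_left h2 h3]

lemma eps23_pos (hp : PosCst c) (hs0 : 0 < s0) (hx : s0 < x) : 0 < eps23 c s0 x := by
  obtain ⟨ha, hD2, hL2m, hL2M, hN2M, hK2M, hK1m, hK1M, hKt1, hKt2, hLt2, hNt2,
    hm1, hm2, h2m2, h3m2, hk, hk2, hk3, hmu⟩ := consts hp
  have hx0 : 0 < x := hs0.trans hx
  have h1 := eps22_pos hp hs0 hx
  have h2 := eps21_pos hp hs0 hx
  have h3 := G2sup_pos hp hs0 hx0
  have h4 := Hinf_pos hp hs0 hx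
  have h5 : 0 < Phi2supC c x := by
    unfold Phi2supC; positivity
  have h6 := Phi2infC_pos hp hs0 hx0
  unfold eps23; positivity

lemma eps23_lt (hp : PosCst c) (hs0 : 0 < s0) (hx : s0 < x) (hxy : x < y) :
    eps23 c s0 y < eps23 c s0 x := by
  obtain ⟨ha, hD2, hL2m, hL2M, hN2M, hK2M, hK1m, hK1M, hKt1, hKt2, hLt2, hNt2,
    hm1, hm2, h2m2, h3m2, hk, hk2, hk3, hmu⟩ := consts hp
  have hx0 : 0 < x := hs0.trans hx
  have hy0 : 0 < y := hx0.trans hxy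
  have hy : s0 < y := hx.trans hxy
  have hEx : 0 < E2inf c s0 x := E2inf_pos
  have hEy : 0 < E2inf c s0 y := E2inf_pos
  have hE := E2inf_le hp hs0 hx hxy.le
  have h22x := eps22_le hp hs0 hx hxy.le
  have h22y := (eps22_pos hp hs0 hy).le
  have h21 := (eps21_lt hp hs0 hx hxy).le
  have h21y := (eps21_pos hp hs0 hy).le
  have hG := G2sup_le hp hs0 hx hxy.le
  have hGy := (G2sup_pos hp hs0 hy0).le
  have hH := Hinf_le hp hs0 hx hxy.le
  have hHx := Hinf_pos hp hs0 hx
  have hHy := Hinf_pos hp hs0 hy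
  have hGx := G2sup_pos hp hs0 hx0
  unfold eps23
  rw [ratio_eq hp hs0 hy0, ratio_eq hp hs0 hx0]
  have hfirst : c.L2M / (c.L2m * E2inf c s0 y) * eps22 c s0 y
      ≤ c.L2M / (c.L2m * E2inf c s0 x) * eps22 c s0 x := by
    apply mul_le_mul _ h22x h22y (by positivity)
    gcongr <;> positivity
  have hsecond : G2sup c s0 y / Hinf c s0 y ^ 2 * eps21 c s0 y
      < G2sup c s0 x / Hinf c s0 x ^ 2 * eps21 c s0 x := by
    apply mul_lt_mul' _ (eps21_lt hp hs0 hx hxy) h21y (by positivity)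
    gcongr <;> positivity
  linarith

lemma eps2_anti (hp : PosCst c) (hs0 : 0 < s0) : StrictAntiOn (eps2 c s0) (Set.Ioi s0) := by
  intro x hx y hy hxy
  have h1 := eps21_lt hp hs0 hx hxy
  have h2 := eps22_le hp hs0 hx hxy.le
  have h3 := eps23_lt hp hs0 hx hxy
  unfold eps2
  linarith

lemma eps2_contAt (hp : PosCst c) (hs0 : 0 < s0) (hx : s0 < x) :
    ContinuousAt (eps2 c s0) x := by
  obtain ⟨ha, hD2, hL2m, hL2M, hN2M, hK2M, hK1m, hK1M, hKt1, hKt2, hLt2, hNt2,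
    hm1, hm2, h2m2, h3m2, hk, hk2, hk3, hmu⟩ := consts hp
  have hx0 : 0 < x := hs0.trans hx
  have hsub : 0 < s0 ^ (-(c.mu + c.nu - 1)) - x ^ (-(c.mu + c.nu - 1)) := by
    have := Real.rpow_lt_rpow_of_neg hs0 hx (show -(c.mu + c.nu - 1) < 0 by linarith)
    linarith
  unfold eps2 eps23 eps21 eps22 G2til G2sup H2til H2sup Phi2til Phi2infC Phi2supC
    E2til E2inf Htil Hsup Hinf
  have hxne : x ≠ 0 := hx0.ne'
  fun_prop (disch := first | positivity | exact Or.inl (by positivity))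

lemma HinfI_pos (hp : PosCst c) (hs0 : 0 < s0) : 0 < HinfI c s0 := by
  obtain ⟨ha, hD2, hL2m, hL2M, hN2M, hK2M, hK1m, hK1M, hKt1, hKt2, hLt2, hNt2,
    hm1, hm2, h2m2, h3m2, hk, hk2, hk3, hmu⟩ := consts hp
  unfold HinfI; positivity

lemma Hinf_t (hp : PosCst c) (hs0 : 0 < s0) : Tendsto (Hinf c s0) atTop (𝓝 (HinfI c s0)) := by
  obtain ⟨ha, hD2, hL2m, hL2M, hN2M, hK2M, hK1m, hK1M, hKt1, hKt2, hLt2, hNt2,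
    hm1, hm2, h2m2, h3m2, hk, hk2, hk3, hmu⟩ := consts hp
  unfold Hinf HinfI
  simpa using (tendsto_const_nhds.sub (tendsto_rpow_neg_atTop hk)).const_mul
    (c.K1m / (c.mu + c.nu - 1))

lemma Hsup_t (hp : PosCst c) (hs0 : 0 < s0) : Tendsto (Hsup c s0) atTop (𝓝 (HsupI c s0)) := by
  obtain ⟨ha, hD2, hL2m, hL2M, hN2M, hK2M, hK1m, hK1M, hKt1, hKt2, hLt2, hNt2,
    hm1, hm2, h2m2, h3m2, hk, hk2, hk3, hmu⟩ := consts hp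
  unfold Hsup HsupI
  simpa using (tendsto_const_nhds.add
    ((tendsto_rpow_neg_atTop hk).const_mul c.K2M)).div_const (c.mu + c.nu - 1)

lemma Htil_t (hp : PosCst c) (hs0 : 0 < s0) : Tendsto (Htil c s0) atTop (𝓝 (HtilI c s0)) := by
  obtain ⟨ha, hD2, hL2m, hL2M, hN2M, hK2M, hK1m, hK1M, hKt1, hKt2, hLt2, hNt2,
    hm1, hm2, h2m2, h3m2, hk, hk2, hk3, hmu⟩ := consts hp
  unfold Htil HtilI
  simpa using (tendsto_const_nhds.add
    ((tendsto_rpow_neg_atTop hk).const_mul c.Kt2)).div_const (c.mu + c.nu - 1)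

lemma denom2_t (hp : PosCst c) (hs0 : 0 < s0) :
    Tendsto (fun r : ℝ => Hinf c s0 r * c.L2m * (2 * c.mu + c.nu - 1)
      * r ^ (2 * c.mu + c.nu - 1)) atTop atTop := by
  obtain ⟨ha, hD2, hL2m, hL2M, hN2M, hK2M, hK1m, hK1M, hKt1, hKt2, hLt2, hNt2,
    hm1, hm2, h2m2, h3m2, hk, hk2, hk3, hmu⟩ := consts hp
  have hHI := HinfI_pos hp hs0
  exact Tendsto.pos_mul_atTop (by positivity)
    (((Hinf_t hp hs0).mul_const c.L2m).mul_const (2 * c.mu + c.nu - 1))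
    (tendsto_rpow_atTop hk2)

lemma E2inf_t (hp : PosCst c) (hs0 : 0 < s0) : Tendsto (E2inf c s0) atTop (𝓝 1) := by
  obtain ⟨ha, hD2, hL2m, hL2M, hN2M, hK2M, hK1m, hK1M, hKt1, hKt2, hLt2, hNt2,
    hm1, hm2, h2m2, h3m2, hk, hk2, hk3, hmu⟩ := consts hp
  have h1 : Tendsto (fun r : ℝ => c.a * c.N2M / (c.L2m * (c.mu - 1) * r ^ (2 * c.mu - 2)))
      atTop (𝓝 0) :=
    tendsto_const_nhds.div_atTop
      (Tendsto.const_mul_atTop (by positivity) (tendsto_rpow_atTop h2m2))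
  have h3 : Tendsto (fun r : ℝ => c.D2 * c.K2M / (Hinf c s0 r * c.L2m * (2 * c.mu + c.nu - 1)
      * r ^ (2 * c.mu + c.nu - 1))) atTop (𝓝 0) :=
    tendsto_const_nhds.div_atTop (denom2_t hp hs0)
  have h5 := (Real.continuous_exp.tendsto _).comp (h1.add h3).neg
  unfold E2inf
  simpa [Function.comp_def] using h5

lemma E2til_t (hp : PosCst c) (hs0 : 0 < s0) : Tendsto (E2til c s0) atTop (𝓝 0) := by
  obtain ⟨ha, hD2, hL2m, hL2M, hN2M, hK2M, hK1m, hK1M, hKt1, hKt2, hLt2, hNt2,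
    hm1, hm2, h2m2, h3m2, hk, hk2, hk3, hmu⟩ := consts hp
  have hHI := HinfI_pos hp hs0
  have hH := Hinf_t hp hs0
  have t1 : Tendsto (fun r : ℝ => c.Nt2 / (c.L2m * (c.mu - 2) * r ^ (c.mu - 2))) atTop (𝓝 0) :=
    tendsto_const_nhds.div_atTop
      (Tendsto.const_mul_atTop (by positivity) (tendsto_rpow_atTop hm2))
  have t2 : Tendsto (fun r : ℝ => c.N2M * c.Lt2 / (c.L2m ^ 2 * (3 * c.mu - 2)
      * r ^ (3 * c.mu - 2))) atTop (𝓝 0) :=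
    tendsto_const_nhds.div_atTop
      (Tendsto.const_mul_atTop (by positivity) (tendsto_rpow_atTop h3m2))
  have t3 : Tendsto (fun r : ℝ => c.Kt2 / (Hinf c s0 r * c.L2m * (2 * c.mu + c.nu - 1)
      * r ^ (2 * c.mu + c.nu - 1))) atTop (𝓝 0) :=
    tendsto_const_nhds.div_atTop (denom2_t hp hs0)
  have t4 : Tendsto (fun r : ℝ => c.K2M / (Hinf c s0 r * c.L2m)) atTop
      (𝓝 (c.K2M / (HinfI c s0 * c.L2m))) :=
    tendsto_const_nhds.div (hH.mul_const c.L2m) (by positivity)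
  have t5 : Tendsto (fun r : ℝ => Htil c s0 r / (Hinf c s0 r * (2 * c.mu + c.nu - 1)
      * r ^ (2 * c.mu + c.nu - 1))) atTop (𝓝 0) :=
    (Htil_t hp hs0).div_atTop
      (Tendsto.pos_mul_atTop (by positivity) (hH.mul_const (2 * c.mu + c.nu - 1))
        (tendsto_rpow_atTop hk2))
  have t6 : Tendsto (fun r : ℝ => c.Lt2 / (c.L2m * (3 * c.mu + c.nu - 1)
      * r ^ (3 * c.mu + c.nu - 1))) atTop (𝓝 0) :=
    tendsto_const_nhds.div_atTop
      (Tendsto.const_mul_atTop (by positivity) (tendsto_rpow_atTop hk3))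
  have total := (((t1.add t2).const_mul (2 * c.a)).add
    ((t3.add (t4.mul (t5.add t6))).const_mul c.D2))
  unfold E2til
  simpa using total

lemma denomA_t (hp : PosCst c) (hs0 : 0 < s0) :
    Tendsto (fun r : ℝ => c.L2m * (c.mu + c.nu - 1) * r ^ (c.mu + c.nu - 1)) atTop atTop := by
  obtain ⟨ha, hD2, hL2m, hL2M, hN2M, hK2M, hK1m, hK1M, hKt1, hKt2, hLt2, hNt2,
    hm1, hm2, h2m2, h3m2, hk, hk2, hk3, hmu⟩ := consts hp
  exact Tendsto.const_mul_atTop (by positivity) (tendsto_rpow_atTop hk)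

lemma Phi2til_t (hp : PosCst c) (hs0 : 0 < s0) : Tendsto (Phi2til c s0) atTop (𝓝 0) := by
  obtain ⟨ha, hD2, hL2m, hL2M, hN2M, hK2M, hK1m, hK1M, hKt1, hKt2, hLt2, hNt2,
    hm1, hm2, h2m2, h3m2, hk, hk2, hk3, hmu⟩ := consts hp
  have t1 := (E2til_t hp hs0).div_atTop (denomA_t hp hs0)
  have t2 : Tendsto (fun r : ℝ => c.Lt2 / (c.L2m ^ 2 * (2 * c.mu + c.nu - 1)
      * r ^ (2 * c.mu + c.nu - 1))) atTop (𝓝 0) :=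
    tendsto_const_nhds.div_atTop
      (Tendsto.const_mul_atTop (by positivity) (tendsto_rpow_atTop hk2))
  unfold Phi2til
  simpa using t1.add t2

lemma H2sup_t (hp : PosCst c) (hs0 : 0 < s0) : Tendsto (H2sup c s0) atTop (𝓝 0) := by
  obtain ⟨ha, hD2, hL2m, hL2M, hN2M, hK2M, hK1m, hK1M, hKt1, hKt2, hLt2, hNt2,
    hm1, hm2, h2m2, h3m2, hk, hk2, hk3, hmu⟩ := consts hp
  have hden : Tendsto (fun r : ℝ => E2inf c s0 r * (c.mu + c.nu - 1)
      * r ^ (c.mu + c.nu - 1)) atTop atTop :=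
    Tendsto.pos_mul_atTop (by positivity) ((E2inf_t hp hs0).mul_const (c.mu + c.nu - 1))
      (tendsto_rpow_atTop hk)
  unfold H2sup
  exact tendsto_const_nhds.div_atTop hden

lemma H2til_t (hp : PosCst c) (hs0 : 0 < s0) : Tendsto (H2til c s0) atTop (𝓝 0) := by
  obtain ⟨ha, hD2, hL2m, hL2M, hN2M, hK2M, hK1m, hK1M, hKt1, hKt2, hLt2, hNt2,
    hm1, hm2, h2m2, h3m2, hk, hk2, hk3, hmu⟩ := consts hp
  have hden : Tendsto (fun r : ℝ => E2inf c s0 r * (c.mu + c.nu - 1)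
      * r ^ (c.mu + c.nu - 1)) atTop atTop :=
    Tendsto.pos_mul_atTop (by positivity) ((E2inf_t hp hs0).mul_const (c.mu + c.nu - 1))
      (tendsto_rpow_atTop hk)
  have hnum : Tendsto (fun r : ℝ => c.Kt2 + c.K2M * E2til c s0 r / E2inf c s0 r) atTop
      (𝓝 (c.Kt2 + c.K2M * 0 / 1)) :=
    tendsto_const_nhds.add (((E2til_t hp hs0).const_mul c.K2M).div (E2inf_t hp hs0) one_ne_zero)
  unfold H2til
  exact hnum.div_atTop hden

lemma G2sup_t (hp : PosCst c) (hs0 : 0 < s0) : Tendsto (G2sup c s0) atTop (𝓝 0) := by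
  obtain ⟨ha, hD2, hL2m, hL2M, hN2M, hK2M, hK1m, hK1M, hKt1, hKt2, hLt2, hNt2,
    hm1, hm2, h2m2, h3m2, hk, hk2, hk3, hmu⟩ := consts hp
  unfold G2sup
  exact (H2sup_t hp hs0).div_atTop (denomA_t hp hs0)

lemma G2til_t (hp : PosCst c) (hs0 : 0 < s0) : Tendsto (G2til c s0) atTop (𝓝 0) := by
  obtain ⟨ha, hD2, hL2m, hL2M, hN2M, hK2M, hK1m, hK1M, hKt1, hKt2, hLt2, hNt2,
    hm1, hm2, h2m2, h3m2, hk, hk2, hk3, hmu⟩ := consts hp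
  have t1 := (H2sup_t hp hs0).mul (Phi2til_t hp hs0)
  have t2 := (H2til_t hp hs0).div_atTop (denomA_t hp hs0)
  unfold G2til
  simpa using t1.add t2

lemma eps21_t (hp : PosCst c) (hs0 : 0 < s0) : Tendsto (eps21 c s0) atTop (𝓝 0) := by
  obtain ⟨ha, hD2, hL2m, hL2M, hN2M, hK2M, hK1m, hK1M, hKt1, hKt2, hLt2, hNt2,
    hm1, hm2, h2m2, h3m2, hk, hk2, hk3, hmu⟩ := consts hp
  have hev : ∀ᶠ r in atTop, (2 * (c.L2M / c.L2m) * (E2til c s0 r / E2inf c s0 r)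
      + 2 * c.L2M * c.Lt2 * (c.mu + c.nu - 1) / (c.L2m ^ 2 * (2 * c.mu + c.nu - 1))
        * (r ^ (-c.mu) / E2inf c s0 r)) = eps21 c s0 r := by
    filter_upwards [eventually_gt_atTop s0] with r hr
    exact (eps21_eq hp hs0 hr).symm
  have h1 := ((E2til_t hp hs0).div (E2inf_t hp hs0) one_ne_zero).const_mul
    (2 * (c.L2M / c.L2m))
  have h2 := ((tendsto_rpow_neg_atTop hmu).div (E2inf_t hp hs0) one_ne_zero).const_mul
    (2 * c.L2M * c.Lt2 * (c.mu + c.nu - 1) / (c.L2m ^ 2 * (2 * c.mu + c.nu - 1)))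
  exact Tendsto.congr' hev (by simpa using h1.add h2)

lemma eps22_t (hp : PosCst c) (hs0 : 0 < s0) : Tendsto (eps22 c s0) atTop (𝓝 0) := by
  obtain ⟨ha, hD2, hL2m, hL2M, hN2M, hK2M, hK1m, hK1M, hKt1, hKt2, hLt2, hNt2,
    hm1, hm2, h2m2, h3m2, hk, hk2, hk3, hmu⟩ := consts hp
  have hHI := HinfI_pos hp hs0
  have h1 := (G2til_t hp hs0).div ((Hinf_t hp hs0).pow 2) (pow_ne_zero 2 hHI.ne')
  have h2 := ((((G2sup_t hp hs0).const_mul 2).mul (Hsup_t hp hs0)).mul (Htil_t hp hs0)).div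
    ((Hinf_t hp hs0).pow 4) (pow_ne_zero 4 hHI.ne')
  unfold eps22
  simpa using h1.add h2

lemma eps23_t (hp : PosCst c) (hs0 : 0 < s0) : Tendsto (eps23 c s0) atTop (𝓝 0) := by
  obtain ⟨ha, hD2, hL2m, hL2M, hN2M, hK2M, hK1m, hK1M, hKt1, hKt2, hLt2, hNt2,
    hm1, hm2, h2m2, h3m2, hk, hk2, hk3, hmu⟩ := consts hp
  have hHI := HinfI_pos hp hs0
  have hev : ∀ᶠ r in atTop, (c.L2M / (c.L2m * E2inf c s0 r) * eps22 c s0 r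
      + G2sup c s0 r / Hinf c s0 r ^ 2 * eps21 c s0 r) = eps23 c s0 r := by
    filter_upwards [eventually_gt_atTop 0] with r hr
    unfold eps23
    rw [ratio_eq hp hs0 hr]
  have h1a : Tendsto (fun r : ℝ => c.L2M / (c.L2m * E2inf c s0 r)) atTop
      (𝓝 (c.L2M / (c.L2m * 1))) :=
    tendsto_const_nhds.div ((E2inf_t hp hs0).const_mul c.L2m) (by simp [hL2m.ne'])
  have h1 := h1a.mul (eps22_t hp hs0)
  have h2 := ((G2sup_t hp hs0).div ((Hinf_t hp hs0).pow 2) (pow_ne_zero 2 hHI.ne')).mul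
    (eps21_t hp hs0)
  exact Tendsto.congr' hev (by simpa using h1.add h2)

lemma eps2_t0 (hp : PosCst c) (hs0 : 0 < s0) : Tendsto (eps2 c s0) atTop (𝓝 0) := by
  have := ((eps21_t hp hs0).add (eps22_t hp hs0)).add (eps23_t hp hs0)
  unfold eps2
  simpa using this

lemma Hinf_t_s0 (hp : PosCst c) (hs0 : 0 < s0) : Tendsto (Hinf c s0) (𝓝[>] s0) (𝓝 0) := by
  obtain ⟨ha, hD2, hL2m, hL2M, hN2M, hK2M, hK1m, hK1M, hKt1, hKt2, hLt2, hNt2,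
    hm1, hm2, h2m2, h3m2, hk, hk2, hk3, hmu⟩ := consts hp
  have hne : s0 ≠ 0 := hs0.ne'
  have hc : ContinuousAt (Hinf c s0) s0 := by
    unfold Hinf
    fun_prop (disch := first | positivity | exact Or.inl (by positivity))
  have h0 : Hinf c s0 s0 = 0 := by unfold Hinf; simp
  have h1 := hc.tendsto.mono_left (nhdsWithin_le_nhds (s := Set.Ioi s0))
  rwa [h0] at h1

lemma denom_t_s0 (hp : PosCst c) (hs0 : 0 < s0) :
    Tendsto (fun r : ℝ => Hinf c s0 r * c.L2m * (2 * c.mu + c.nu - 1)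
      * r ^ (2 * c.mu + c.nu - 1)) (𝓝[>] s0) (𝓝[>] 0) := by
  obtain ⟨ha, hD2, hL2m, hL2M, hN2M, hK2M, hK1m, hK1M, hKt1, hKt2, hLt2, hNt2,
    hm1, hm2, h2m2, h3m2, hk, hk2, hk3, hmu⟩ := consts hp
  have hrp : Tendsto (fun r : ℝ => r ^ (2 * c.mu + c.nu - 1)) (𝓝[>] s0)
      (𝓝 (s0 ^ (2 * c.mu + c.nu - 1))) :=
    ((Real.continuousAt_rpow_const s0 _ (Or.inl hs0.ne')).tendsto).mono_left nhdsWithin_le_nhds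
  have hbase : Tendsto (fun r : ℝ => Hinf c s0 r * c.L2m * (2 * c.mu + c.nu - 1)
      * r ^ (2 * c.mu + c.nu - 1)) (𝓝[>] s0) (𝓝 0) := by
    simpa using (((Hinf_t_s0 hp hs0).mul_const c.L2m).mul_const (2 * c.mu + c.nu - 1)).mul hrp
  apply tendsto_nhdsWithin_of_tendsto_nhds_of_eventually_within _ hbase
  filter_upwards [self_mem_nhdsWithin] with r hr
  have hr' : s0 < r := hr
  have hH := Hinf_pos hp hs0 hr'
  have hr0 : 0 < r := hs0.trans hr'
  simp only [Set.mem_Ioi]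
  positivity

lemma invE2inf_t_s0 (hp : PosCst c) (hs0 : 0 < s0) :
    Tendsto (fun r : ℝ => (E2inf c s0 r)⁻¹) (𝓝[>] s0) atTop := by
  obtain ⟨ha, hD2, hL2m, hL2M, hN2M, hK2M, hK1m, hK1M, hKt1, hKt2, hLt2, hNt2,
    hm1, hm2, h2m2, h3m2, hk, hk2, hk3, hmu⟩ := consts hp
  have h2 : Tendsto (fun r : ℝ => c.D2 * c.K2M / (Hinf c s0 r * c.L2m
      * (2 * c.mu + c.nu - 1) * r ^ (2 * c.mu + c.nu - 1))) (𝓝[>] s0) atTop := by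
    have := Tendsto.const_mul_atTop (show (0:ℝ) < c.D2 * c.K2M by positivity)
      (tendsto_inv_nhdsGT_zero.comp (denom_t_s0 hp hs0))
    simpa [div_eq_mul_inv, Function.comp] using this
  have hA : Tendsto (fun r : ℝ => c.a * c.N2M / (c.L2m * (c.mu - 1) * r ^ (2 * c.mu - 2))
      + c.D2 * c.K2M / (Hinf c s0 r * c.L2m * (2 * c.mu + c.nu - 1)
        * r ^ (2 * c.mu + c.nu - 1))) (𝓝[>] s0) atTop := by
    apply Tendsto.zero_eventuallyLE_add_atTop ?_ h2
    filter_upwards [self_mem_nhdsWithin] with r hr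
    simp only [Pi.zero_apply]
    have hr0 : 0 < r := hs0.trans hr
    positivity
  have h3 := Real.tendsto_exp_atTop.comp hA
  exact h3.congr fun r => by
    simp only [Function.comp_apply, E2inf]
    rw [Real.exp_neg, inv_inv]

lemma eps2_t_top (hp : PosCst c) (hs0 : 0 < s0) : Tendsto (eps2 c s0) (𝓝[>] s0) atTop := by
  obtain ⟨ha, hD2, hL2m, hL2M, hN2M, hK2M, hK1m, hK1M, hKt1, hKt2, hLt2, hNt2,
    hm1, hm2, h2m2, h3m2, hk, hk2, hk3, hmu⟩ := consts hp
  have hC1 : 0 < 2 * c.L2M * c.Lt2 * (c.mu + c.nu - 1) / (c.L2m ^ 2 * (2 * c.mu + c.nu - 1))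
      * (s0 + 1) ^ (-c.mu) := by
    have : (0:ℝ) < s0 + 1 := by linarith
    positivity
  have hg := Tendsto.const_mul_atTop hC1 (invE2inf_t_s0 hp hs0)
  apply tendsto_atTop_mono' _ ?_ hg
  filter_upwards [Ioo_mem_nhdsGT (show s0 < s0 + 1 by linarith)] with r hr
  have hrs : s0 < r := hr.1
  have hr1 : r ≤ s0 + 1 := hr.2.le
  have hr0 : 0 < r := hs0.trans hrs
  have hE : 0 < E2inf c s0 r := E2inf_pos
  have hEt := E2til_pos hp hs0 hrs
  have h22 := eps22_pos hp hs0 hrs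
  have h23 := eps23_pos hp hs0 hrs
  have hpow : (s0 + 1) ^ (-c.mu) ≤ r ^ (-c.mu) := rpow_anti hr0 hr1 hmu
  have hfirst : 0 ≤ 2 * (c.L2M / c.L2m) * (E2til c s0 r / E2inf c s0 r) := by positivity
  have hC0 : (0:ℝ) ≤ 2 * c.L2M * c.Lt2 * (c.mu + c.nu - 1)
      / (c.L2m ^ 2 * (2 * c.mu + c.nu - 1)) := by positivity
  have hkey := mul_le_mul_of_nonneg_right (mul_le_mul_of_nonneg_left hpow hC0)
    (inv_nonneg.mpr hE.le)
  have heq := eps21_eq hp hs0 hrs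
  have hdiv : r ^ (-c.mu) / E2inf c s0 r = r ^ (-c.mu) * (E2inf c s0 r)⁻¹ :=
    div_eq_mul_inv _ _
  rw [hdiv, ← mul_assoc] at heq
  show 2 * c.L2M * c.Lt2 * (c.mu + c.nu - 1) / (c.L2m ^ 2 * (2 * c.mu + c.nu - 1))
      * (s0 + 1) ^ (-c.mu) * (E2inf c s0 r)⁻¹ ≤ eps2 c s0 r
  unfold eps2
  rw [heq]
  linarith

end Stmt18Helpers

theorem stmt18 (c : Cst) (hpos : PosCst c) (s0 : ℝ) (hs0 : 0 < s0) :
    StrictAntiOn (eps2 c s0) (Set.Ioi s0) ∧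
    Tendsto (eps2 c s0) (𝓝[>] s0) atTop ∧
    Tendsto (eps2 c s0) atTop (𝓝 0) ∧
    ∃ r2, s0 < r2 ∧ eps2 c s0 r2 = 1 ∧ ∀ r0, r2 < r0 → eps2 c s0 r0 < 1 := by
  have hanti := Stmt18Helpers.eps2_anti hpos hs0
  have htop := Stmt18Helpers.eps2_t_top hpos hs0
  have hzero := Stmt18Helpers.eps2_t0 hpos hs0
  refine ⟨hanti, htop, hzero, ?_⟩
  have hA' : ∀ᶠ r in 𝓝[>] s0, 1 ≤ eps2 c s0 r := htop.eventually_ge_atTop 1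
  obtain ⟨A, hA1, hAmem⟩ := (hA'.and self_mem_nhdsWithin).exists
  have hAs0 : s0 < A := hAmem
  have hB' : ∀ᶠ r in atTop, eps2 c s0 r < 1 := hzero.eventually_lt_const one_pos
  obtain ⟨B, hB1, hAB⟩ := (hB'.and (eventually_ge_atTop A)).exists
  have hcont : ContinuousOn (eps2 c s0) (Set.Icc A B) := fun r hr =>
    (Stmt18Helpers.eps2_contAt hpos hs0 (lt_of_lt_of_le hAs0 hr.1)).continuousWithinAt
  have h1mem : (1:ℝ) ∈ Set.Icc (eps2 c s0 B) (eps2 c s0 A) := ⟨hB1.le, hA1⟩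
  obtain ⟨r2, hr2mem, hr2⟩ := intermediate_value_Icc' hAB hcont h1mem
  refine ⟨r2, lt_of_lt_of_le hAs0 hr2mem.1, hr2, ?_⟩
  intro r0 hr0
  have hr2Ioi : r2 ∈ Set.Ioi s0 := lt_of_lt_of_le hAs0 hr2mem.1
  have h := hanti hr2Ioi (Set.mem_Ioi.mpr (lt_trans hr2Ioi hr0)) hr0
  rwa [hr2] at h
end
end

section
/- Under assumptions (A1)–(A4) with μ > 2, the operator Ψ(f1,f2) = (V1(f1,f2), V2(f1,f2)) maps 𝒦 into 𝒦; in particular, for every (f1,f2) ∈ 𝒦, V1(f1,f2) is continuous on [s0,r0], V2(f1,f2) is bounded and continuous on [r0,∞), V2(f1,f2)(r0) = 0, and V2(f1,f2)(η) → −1 as η → ∞. Moreover, if Ψ is a contraction on 𝒦 (i.e. there exists ε < 1 with ‖Ψ(f1,f2) − Ψ(g1,g2)‖ ≤ ε·‖(f1,f2) − (g1,g2)‖ for all (f1,f2), (g1,g2) ∈ 𝒦), then Ψ has a unique fixed point (f1*, f2*) ∈ 𝒦. -/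
open MeasureTheory Filter Topology

noncomputable section

section Helpers
open intervalIntegral

lemma contOn_primitive_Icc {g : ℝ → ℝ} {a b : ℝ} (hab : a ≤ b)
    (hg : ContinuousOn g (Set.Icc a b)) :
    ContinuousOn (fun x => ∫ v in a..x, g v) (Set.Icc a b) := by
  have h := intervalIntegral.continuousOn_primitive_interval (a := a) (b := b) (f := g)
    (μ := volume) ?_
  · rwa [Set.uIcc_of_le hab] at h
  · rw [Set.uIcc_of_le hab]; exact hg.integrableOn_Icc

lemma contOn_primitive_Ici {g : ℝ → ℝ} {a : ℝ} (hg : ContinuousOn g (Set.Ici a)) :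
    ContinuousOn (fun x => ∫ v in a..x, g v) (Set.Ici a) := by
  intro x hx
  have hx1 : x ≤ x + 1 := by linarith
  have h1 : ContinuousOn (fun x => ∫ v in a..x, g v) (Set.Icc a (x + 1)) :=
    contOn_primitive_Icc (le_trans hx hx1) (hg.mono Set.Icc_subset_Ici_self)
  refine ContinuousWithinAt.mono_of_mem_nhdsWithin (h1 x ⟨hx, hx1⟩) ?_
  have hsub : Set.Ici a ∩ Set.Iio (x + 1) ⊆ Set.Icc a (x + 1) :=
    fun y hy => ⟨hy.1, le_of_lt hy.2⟩
  exact Filter.mem_of_superset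
    (Filter.inter_mem self_mem_nhdsWithin
      (mem_nhdsWithin_of_mem_nhds (Iio_mem_nhds (by linarith)))) hsub

lemma rpow_add_aux {v : ℝ} (hv : 0 < v) (a b : ℝ) : v ^ a * v ^ b = v ^ (a + b) :=
  (Real.rpow_add hv a b).symm

end Helpers

section Part1

variable (c : Cst) (s0 r0 : ℝ) (L1 N1 K1 L2 N2 K2 : (ℝ → ℝ) → ℝ → ℝ) (f1 f2 : ℝ → ℝ)

set_option maxHeartbeats 2000000 in
lemma part1 (hpos : PosC c s0 r0) (hA : Assum c s0 r0 L1 N1 K1 L2 N2 K2)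
    (hf1 : f1 ∈ C1 s0 r0) (hf2 : f2 ∈ Mset r0) :
    (fun η => V1f c s0 r0 L1 N1 K1 L2 N2 K2 f1 f2 η) ∈ C1 s0 r0 ∧
    (fun η => V2f c s0 r0 L1 N1 K1 L2 N2 K2 f1 f2 η) ∈ Mset r0 := by
  obtain ⟨ha, hnu, hnu1, hmu, hs0, hsr, hD1, hD2, hQ, hD1s, hD2s, hL1m, hL1M, hN1m, hN1M,
    hK1m, hK1M, hL2m, hL2M, hN2m, hN2M, hK2m, hK2M, -, -, -, -, -, -⟩ := hpos
  obtain ⟨hA1, hA2, hB1, hB2, -, -⟩ := hA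
  obtain ⟨hL1c, hN1c, hK1c⟩ := hA1 f1 hf1
  obtain ⟨hL2c, hN2c, hK2c⟩ := hA2 f2 hf2
  have hr0 : 0 < r0 := hs0.trans hsr
  have hx1 : ∀ η ∈ Set.Icc s0 r0, 0 < η := fun η hη => hs0.trans_le hη.1
  have hx2 : ∀ η ∈ Set.Ici r0, 0 < η := fun η hη => hr0.trans_le hη
  -- positivity of L1, K1, N1 on Icc
  have hL1pos : ∀ η ∈ Set.Icc s0 r0, 0 < L1 f1 η := fun η hη =>
    (mul_pos hL1m (Real.rpow_pos_of_pos (hx1 η hη) _)).trans_le (hB1 f1 hf1 η hη).1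
  have hN1pos : ∀ η ∈ Set.Icc s0 r0, 0 < N1 f1 η := fun η hη =>
    (mul_pos hN1m (Real.rpow_pos_of_pos (hx1 η hη) _)).trans_le (hB1 f1 hf1 η hη).2.2.1
  have hK1pos : ∀ η ∈ Set.Icc s0 r0, 0 < K1 f1 η := fun η hη =>
    (mul_pos hK1m (Real.rpow_pos_of_pos (hx1 η hη) _)).trans_le (hB1 f1 hf1 η hη).2.2.2.2.1
  have hL2pos : ∀ η ∈ Set.Ici r0, 0 < L2 f2 η := fun η hη =>
    (mul_pos hL2m (Real.rpow_pos_of_pos (hx2 η hη) _)).trans_le (hB2 f2 hf2 η hη).1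
  have hN2pos : ∀ η ∈ Set.Ici r0, 0 < N2 f2 η := fun η hη =>
    (mul_pos hN2m (Real.rpow_pos_of_pos (hx2 η hη) _)).trans_le (hB2 f2 hf2 η hη).2.2.1
  have hK2pos : ∀ η ∈ Set.Ici r0, 0 < K2 f2 η := fun η hη =>
    (mul_pos hK2m (Real.rpow_pos_of_pos (hx2 η hη) _)).trans_le (hB2 f2 hf2 η hη).2.2.2.2.1
  have hpow1c : ContinuousOn (fun v : ℝ => v ^ c.nu) (Set.Icc s0 r0) :=
    continuousOn_id.rpow_const (fun x hx => Or.inl (hx1 x hx).ne')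
  have hpow2c : ContinuousOn (fun v : ℝ => v ^ c.nu) (Set.Ici r0) :=
    continuousOn_id.rpow_const (fun x hx => Or.inl (hx2 x hx).ne')
  -- H > 0
  set H := Hf c s0 r0 L1 N1 K1 L2 N2 K2 f1 f2 with hHdef
  have hq1c : ContinuousOn (fun v => K1 f1 v / v ^ c.nu) (Set.Icc s0 r0) :=
    hK1c.div hpow1c (fun x hx => (Real.rpow_pos_of_pos (hx1 x hx) _).ne')
  have hq1int : IntervalIntegrable (fun v => K1 f1 v / v ^ c.nu) volume s0 r0 := by
    apply ContinuousOn.intervalIntegrable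
    rwa [Set.uIcc_of_le hsr.le]
  have hH : 0 < H := by
    have h1 : 0 < ∫ v in s0..r0, K1 f1 v / v ^ c.nu :=
      intervalIntegral.intervalIntegral_pos_of_pos_on hq1int
        (fun x hx => div_pos (hK1pos x ⟨hx.1.le, hx.2.le⟩)
          (Real.rpow_pos_of_pos (hx1 x ⟨hx.1.le, hx.2.le⟩) _)) hsr
    have h2 : 0 ≤ ∫ v in Set.Ioi r0, K2 f2 v / v ^ c.nu :=
      setIntegral_nonneg measurableSet_Ioi (fun v hv =>
        (div_pos (hK2pos v (Set.Ioi_subset_Ici_self hv)) (Real.rpow_pos_of_pos (hx2 v (Set.Ioi_subset_Ici_self hv)) _)).le)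
    rw [hHdef]; unfold Hf; linarith
  -- side 1 continuity
  have he1c : ContinuousOn (fun v => 2 * c.a * v * (N1 f1 v / L1 f1 v)
      + c.D1 / H * (K1 f1 v / (L1 f1 v * v ^ c.nu))) (Set.Icc s0 r0) := by
    refine ContinuousOn.add ?_ ?_
    · exact (continuousOn_const.mul continuousOn_id).mul
        (hN1c.div hL1c (fun x hx => (hL1pos x hx).ne'))
    · exact continuousOn_const.mul (hK1c.div (hL1c.mul hpow1c)
        (fun x hx => (mul_pos (hL1pos x hx) (Real.rpow_pos_of_pos (hx1 x hx) _)).ne'))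
  have hE1c : ContinuousOn (E1f c s0 r0 L1 N1 K1 L2 N2 K2 f1 f2) (Set.Icc s0 r0) := by
    unfold E1f
    exact Real.continuous_exp.comp_continuousOn ((contOn_primitive_Icc hsr.le he1c).neg)
  have hE1pos : ∀ η, 0 < E1f c s0 r0 L1 N1 K1 L2 N2 K2 f1 f2 η := fun η => Real.exp_pos _
  have hp1c : ContinuousOn (fun v => E1f c s0 r0 L1 N1 K1 L2 N2 K2 f1 f2 v
      / (L1 f1 v * v ^ c.nu)) (Set.Icc s0 r0) :=
    hE1c.div (hL1c.mul hpow1c)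
      (fun x hx => (mul_pos (hL1pos x hx) (Real.rpow_pos_of_pos (hx1 x hx) _)).ne')
  have hPhi1c : ContinuousOn (Phi1f c s0 r0 L1 N1 K1 L2 N2 K2 f1 f2) (Set.Icc s0 r0) := by
    unfold Phi1f; exact contOn_primitive_Icc hsr.le hp1c
  have hH1c : ContinuousOn (H1f c s0 r0 L1 N1 K1 L2 N2 K2 f1 f2) (Set.Icc s0 r0) := by
    unfold H1f
    refine contOn_primitive_Icc hsr.le (hK1c.div (hpow1c.mul hE1c) (fun x hx => ?_))
    exact (mul_pos (Real.rpow_pos_of_pos (hx1 x hx) _) (hE1pos x)).ne'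
  have hG1c : ContinuousOn (G1f c s0 r0 L1 N1 K1 L2 N2 K2 f1 f2) (Set.Icc s0 r0) := by
    unfold G1f
    refine contOn_primitive_Icc hsr.le (ContinuousOn.div (hE1c.mul hH1c) (hL1c.mul hpow1c)
      (fun x hx => (mul_pos (hL1pos x hx) (Real.rpow_pos_of_pos (hx1 x hx) _)).ne'))
  have hV1 : (fun η => V1f c s0 r0 L1 N1 K1 L2 N2 K2 f1 f2 η) ∈ C1 s0 r0 := by
    show ContinuousOn _ (Set.Icc s0 r0)
    unfold V1f
    exact (continuousOn_const.mul (continuousOn_const.sub hPhi1c)).add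
      (continuousOn_const.mul (continuousOn_const.sub hG1c))
  refine ⟨hV1, ?_⟩
  -- side 2
  set e2 : ℝ → ℝ := fun v => 2 * c.a * v * (N2 f2 v / L2 f2 v)
      + c.D2 / H * (K2 f2 v / (L2 f2 v * v ^ c.nu)) with he2def
  have hE2eq : ∀ η, E2f c s0 r0 L1 N1 K1 L2 N2 K2 f1 f2 η
      = Real.exp (-(∫ v in r0..η, e2 v)) := fun η => rfl
  have he2c : ContinuousOn e2 (Set.Ici r0) := by
    refine ContinuousOn.add ?_ ?_
    · exact (continuousOn_const.mul continuousOn_id).mul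
        (hN2c.div hL2c (fun x hx => (hL2pos x hx).ne'))
    · exact continuousOn_const.mul (hK2c.div (hL2c.mul hpow2c)
        (fun x hx => (mul_pos (hL2pos x hx) (Real.rpow_pos_of_pos (hx2 x hx) _)).ne'))
  have he2nn : ∀ v ∈ Set.Ici r0, 0 ≤ e2 v := by
    intro v hv
    have hv0 : (0:ℝ) ≤ v := (hx2 v hv).le
    refine add_nonneg (mul_nonneg (by nlinarith [ha.le]) ?_) (mul_nonneg ?_ ?_)
    · exact (div_pos (hN2pos v hv) (hL2pos v hv)).le
    · exact (div_pos hD2 hH).le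
    · exact (div_pos (hK2pos v hv)
        (mul_pos (hL2pos v hv) (Real.rpow_pos_of_pos (hx2 v hv) _))).le
  -- pointwise bound on e2 by an integrable power function
  set gbd : ℝ → ℝ := fun v => 2 * c.a * c.N2M / c.L2m * v ^ (1 - 2 * c.mu)
      + c.D2 / H * (c.K2M / c.L2m) * v ^ (-c.mu + (-c.mu + -c.nu)) with hgbddef
  have hgbd_int : IntegrableOn gbd (Set.Ioi r0) := by
    refine Integrable.add ?_ ?_
    · exact (integrableOn_Ioi_rpow_of_lt (by linarith) hr0).const_mul _
    · exact (integrableOn_Ioi_rpow_of_lt (by linarith) hr0).const_mul _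
  have hgbd_c : ContinuousOn gbd (Set.Ici r0) := by
    refine ContinuousOn.add ?_ ?_
    · exact continuousOn_const.mul
        (continuousOn_id.rpow_const (fun x hx => Or.inl (hx2 x hx).ne'))
    · exact continuousOn_const.mul
        (continuousOn_id.rpow_const (fun x hx => Or.inl (hx2 x hx).ne'))
  have hgbd_nn : ∀ v ∈ Set.Ioi r0, 0 ≤ gbd v := by
    intro v hv
    have hv0 : 0 < v := hx2 v (Set.Ioi_subset_Ici_self hv)
    refine add_nonneg (mul_nonneg ?_ (Real.rpow_nonneg hv0.le _))
      (mul_nonneg ?_ (Real.rpow_nonneg hv0.le _))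
    · positivity
    · exact mul_nonneg (div_pos hD2 hH).le (div_pos hK2M hL2m).le
  have he2le : ∀ v ∈ Set.Ici r0, e2 v ≤ gbd v := by
    intro v hv
    have hvp : 0 < v := hx2 v hv
    have hb := hB2 f2 hf2 v hv
    have key1 : 2 * c.a * v * (c.N2M * v ^ (-c.mu) / (c.L2m * v ^ c.mu))
        = 2 * c.a * c.N2M / c.L2m * v ^ (1 - 2 * c.mu) := by
      rw [show (1 : ℝ) - 2 * c.mu = 1 + (-c.mu + -c.mu) by ring, Real.rpow_add hvp,
        Real.rpow_add hvp, Real.rpow_one, Real.rpow_neg hvp.le]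
      have h0 : v ^ c.mu ≠ 0 := (Real.rpow_pos_of_pos hvp _).ne'
      field_simp
    have key2 : c.D2 / H * (c.K2M * v ^ (-c.mu) / (c.L2m * v ^ c.mu * v ^ c.nu))
        = c.D2 / H * (c.K2M / c.L2m) * v ^ (-c.mu + (-c.mu + -c.nu)) := by
      rw [Real.rpow_add hvp, Real.rpow_add hvp, Real.rpow_neg hvp.le, Real.rpow_neg hvp.le]
      have h0 : v ^ c.mu ≠ 0 := (Real.rpow_pos_of_pos hvp _).ne'
      have h1 : v ^ c.nu ≠ 0 := (Real.rpow_pos_of_pos hvp _).ne'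
      field_simp
    have t1 : 2 * c.a * v * (N2 f2 v / L2 f2 v)
        ≤ 2 * c.a * v * (c.N2M * v ^ (-c.mu) / (c.L2m * v ^ c.mu)) := by
      refine mul_le_mul_of_nonneg_left ?_ (by nlinarith [ha.le, hvp.le])
      exact div_le_div₀ (mul_nonneg hN2M.le (Real.rpow_nonneg hvp.le _)) hb.2.2.2.1
        (mul_pos hL2m (Real.rpow_pos_of_pos hvp _)) hb.1
    have t2 : c.D2 / H * (K2 f2 v / (L2 f2 v * v ^ c.nu))
        ≤ c.D2 / H * (c.K2M * v ^ (-c.mu) / (c.L2m * v ^ c.mu * v ^ c.nu)) := by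
      refine mul_le_mul_of_nonneg_left ?_ (div_pos hD2 hH).le
      refine div_le_div₀ (mul_nonneg hK2M.le (Real.rpow_nonneg hvp.le _)) hb.2.2.2.2.2
        (mul_pos (mul_pos hL2m (Real.rpow_pos_of_pos hvp _)) (Real.rpow_pos_of_pos hvp _)) ?_
      exact mul_le_mul_of_nonneg_right hb.1 (Real.rpow_nonneg hvp.le _)
    calc e2 v ≤ 2 * c.a * v * (c.N2M * v ^ (-c.mu) / (c.L2m * v ^ c.mu))
          + c.D2 / H * (c.K2M * v ^ (-c.mu) / (c.L2m * v ^ c.mu * v ^ c.nu)) :=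
        add_le_add t1 t2
      _ = gbd v := by rw [key1, key2]
  set B := ∫ v in Set.Ioi r0, gbd v with hBdef
  have hIbd : ∀ η ∈ Set.Ici r0, (∫ v in r0..η, e2 v) ≤ B := by
    intro η hη
    have hint_e2 : IntervalIntegrable e2 volume r0 η := by
      apply ContinuousOn.intervalIntegrable
      rw [Set.uIcc_of_le hη]; exact he2c.mono Set.Icc_subset_Ici_self
    have hint_g : IntervalIntegrable gbd volume r0 η := by
      apply ContinuousOn.intervalIntegrable
      rw [Set.uIcc_of_le hη]; exact hgbd_c.mono Set.Icc_subset_Ici_self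
    calc (∫ v in r0..η, e2 v) ≤ ∫ v in r0..η, gbd v :=
        intervalIntegral.integral_mono_on hη hint_e2 hint_g (fun x hx => he2le x hx.1)
      _ = ∫ v in Set.Ioc r0 η, gbd v := intervalIntegral.integral_of_le hη
      _ ≤ B := setIntegral_mono_set hgbd_int
          ((ae_restrict_iff' measurableSet_Ioi).2 (Filter.Eventually.of_forall hgbd_nn))
          (HasSubset.Subset.eventuallyLE Set.Ioc_subset_Ioi_self)
  have hE2pos : ∀ η, 0 < E2f c s0 r0 L1 N1 K1 L2 N2 K2 f1 f2 η := fun η => Real.exp_pos _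
  have hE2ge : ∀ η ∈ Set.Ici r0, Real.exp (-B) ≤ E2f c s0 r0 L1 N1 K1 L2 N2 K2 f1 f2 η := by
    intro η hη
    rw [hE2eq]
    exact Real.exp_le_exp.2 (neg_le_neg (hIbd η hη))
  have hE2le1 : ∀ η ∈ Set.Ici r0, E2f c s0 r0 L1 N1 K1 L2 N2 K2 f1 f2 η ≤ 1 := by
    intro η hη
    rw [hE2eq, Real.exp_le_one_iff, neg_nonpos]
    exact intervalIntegral.integral_nonneg hη (fun u hu => he2nn u hu.1)
  have hE2c : ContinuousOn (E2f c s0 r0 L1 N1 K1 L2 N2 K2 f1 f2) (Set.Ici r0) := by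
    have : ContinuousOn (fun η => Real.exp (-(∫ v in r0..η, e2 v))) (Set.Ici r0) :=
      Real.continuous_exp.comp_continuousOn ((contOn_primitive_Ici he2c).neg)
    exact this
  -- Phi2
  set p2 : ℝ → ℝ := fun v => E2f c s0 r0 L1 N1 K1 L2 N2 K2 f1 f2 v / (L2 f2 v * v ^ c.nu)
    with hp2def
  have hPhi2eq : ∀ η, Phi2f c s0 r0 L1 N1 K1 L2 N2 K2 f1 f2 η = ∫ v in r0..η, p2 v :=
    fun η => rfl
  have hPhi2Ieq : Phi2I c s0 r0 L1 N1 K1 L2 N2 K2 f1 f2 = ∫ v in Set.Ioi r0, p2 v := rfl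
  have hp2c : ContinuousOn p2 (Set.Ici r0) :=
    hE2c.div (hL2c.mul hpow2c)
      (fun x hx => (mul_pos (hL2pos x hx) (Real.rpow_pos_of_pos (hx2 x hx) _)).ne')
  have hp2pos : ∀ v ∈ Set.Ici r0, 0 < p2 v := fun v hv =>
    div_pos (hE2pos v) (mul_pos (hL2pos v hv) (Real.rpow_pos_of_pos (hx2 v hv) _))
  have hp2le : ∀ v ∈ Set.Ici r0, p2 v ≤ 1 / c.L2m * v ^ (-c.mu + -c.nu) := by
    intro v hv
    have hvp : 0 < v := hx2 v hv
    have h1 : p2 v ≤ 1 / (c.L2m * (v ^ c.mu * v ^ c.nu)) := by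
      refine div_le_div₀ zero_le_one (hE2le1 v hv)
        (by positivity) ?_
      calc c.L2m * (v ^ c.mu * v ^ c.nu) = c.L2m * v ^ c.mu * v ^ c.nu := by ring
        _ ≤ L2 f2 v * v ^ c.nu :=
          mul_le_mul_of_nonneg_right (hB2 f2 hf2 v hv).1 (Real.rpow_nonneg hvp.le _)
    refine h1.trans_eq ?_
    rw [Real.rpow_add hvp, Real.rpow_neg hvp.le, Real.rpow_neg hvp.le]
    have h0 : v ^ c.mu ≠ 0 := (Real.rpow_pos_of_pos hvp _).ne'
    have h1 : v ^ c.nu ≠ 0 := (Real.rpow_pos_of_pos hvp _).ne'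
    field_simp
  have hp2int : IntegrableOn p2 (Set.Ioi r0) := by
    refine Integrable.mono'
      ((integrableOn_Ioi_rpow_of_lt (show -c.mu + -c.nu < -1 by linarith) hr0).const_mul
        (1 / c.L2m))
      ((hp2c.mono Set.Ioi_subset_Ici_self).aestronglyMeasurable measurableSet_Ioi) ?_
    refine (ae_restrict_iff' measurableSet_Ioi).2 (Filter.Eventually.of_forall fun v hv => ?_)
    have hvI : v ∈ Set.Ici r0 := Set.Ioi_subset_Ici_self hv
    rw [Real.norm_eq_abs, abs_of_nonneg (hp2pos v hvI).le]
    exact hp2le v hvI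
  have hPhi2tend : Tendsto (fun b => ∫ v in r0..b, p2 v) atTop
      (𝓝 (∫ v in Set.Ioi r0, p2 v)) :=
    intervalIntegral_tendsto_integral_Ioi r0 hp2int tendsto_id
  have hp2nn_ae : (0 : ℝ → ℝ) ≤ᵐ[volume.restrict (Set.Ioi r0)] p2 :=
    (ae_restrict_iff' measurableSet_Ioi).2
      (Filter.Eventually.of_forall fun v hv => (hp2pos v (Set.Ioi_subset_Ici_self hv)).le)
  have hPhi2le : ∀ η ∈ Set.Ici r0,
      Phi2f c s0 r0 L1 N1 K1 L2 N2 K2 f1 f2 η ≤ ∫ v in Set.Ioi r0, p2 v := by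
    intro η hη
    rw [hPhi2eq, intervalIntegral.integral_of_le hη]
    exact setIntegral_mono_set hp2int hp2nn_ae
      (HasSubset.Subset.eventuallyLE Set.Ioc_subset_Ioi_self)
  have hPhi2nn : ∀ η ∈ Set.Ici r0, 0 ≤ Phi2f c s0 r0 L1 N1 K1 L2 N2 K2 f1 f2 η := by
    intro η hη
    rw [hPhi2eq]
    exact intervalIntegral.integral_nonneg hη (fun u hu => (hp2pos u hu.1).le)
  have hPhi2Ipos : 0 < Phi2I c s0 r0 L1 N1 K1 L2 N2 K2 f1 f2 := by
    rw [hPhi2Ieq]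
    have hint : IntervalIntegrable p2 volume r0 (r0 + 1) := by
      apply ContinuousOn.intervalIntegrable
      rw [Set.uIcc_of_le (by linarith)]; exact hp2c.mono Set.Icc_subset_Ici_self
    have h1 : 0 < ∫ v in r0..(r0 + 1), p2 v :=
      intervalIntegral.intervalIntegral_pos_of_pos_on hint
        (fun x hx => hp2pos x (le_of_lt hx.1)) (by linarith)
    have h2 : (∫ v in r0..(r0 + 1), p2 v) ≤ ∫ v in Set.Ioi r0, p2 v := by
      rw [intervalIntegral.integral_of_le (by linarith : r0 ≤ r0 + 1)]
      exact setIntegral_mono_set hp2int hp2nn_ae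
        (HasSubset.Subset.eventuallyLE Set.Ioc_subset_Ioi_self)
    linarith
  have hPhi2c : ContinuousOn (fun η => Phi2f c s0 r0 L1 N1 K1 L2 N2 K2 f1 f2 η)
      (Set.Ici r0) := contOn_primitive_Ici hp2c
  -- H2
  set q2 : ℝ → ℝ := fun v => K2 f2 v / (v ^ c.nu * E2f c s0 r0 L1 N1 K1 L2 N2 K2 f1 f2 v)
    with hq2def
  have hH2eq : ∀ η, H2f c s0 r0 L1 N1 K1 L2 N2 K2 f1 f2 η = ∫ v in r0..η, q2 v :=
    fun η => rfl
  have hq2c : ContinuousOn q2 (Set.Ici r0) :=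
    hK2c.div (hpow2c.mul hE2c)
      (fun x hx => (mul_pos (Real.rpow_pos_of_pos (hx2 x hx) _) (hE2pos x)).ne')
  have hq2pos : ∀ v ∈ Set.Ici r0, 0 < q2 v := fun v hv =>
    div_pos (hK2pos v hv) (mul_pos (Real.rpow_pos_of_pos (hx2 v hv) _) (hE2pos v))
  set CHb : ℝ → ℝ := fun v => c.K2M / Real.exp (-B) * v ^ (-c.mu + -c.nu) with hCHbdef
  have hCHb_int : IntegrableOn CHb (Set.Ioi r0) :=
    (integrableOn_Ioi_rpow_of_lt (show -c.mu + -c.nu < -1 by linarith) hr0).const_mul _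
  have hCHb_c : ContinuousOn CHb (Set.Ici r0) :=
    continuousOn_const.mul (continuousOn_id.rpow_const (fun x hx => Or.inl (hx2 x hx).ne'))
  have hCHb_nn : ∀ v ∈ Set.Ioi r0, 0 ≤ CHb v := fun v hv =>
    mul_nonneg (div_pos hK2M (Real.exp_pos _)).le
      (Real.rpow_nonneg (hx2 v (Set.Ioi_subset_Ici_self hv)).le _)
  have hq2le : ∀ v ∈ Set.Ici r0, q2 v ≤ CHb v := by
    intro v hv
    have hvp : 0 < v := hx2 v hv
    have h1 : q2 v ≤ c.K2M * v ^ (-c.mu) / (v ^ c.nu * Real.exp (-B)) := by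
      refine div_le_div₀ (mul_nonneg hK2M.le (Real.rpow_nonneg hvp.le _))
        (hB2 f2 hf2 v hv).2.2.2.2.2
        (mul_pos (Real.rpow_pos_of_pos hvp _) (Real.exp_pos _)) ?_
      exact mul_le_mul_of_nonneg_left (hE2ge v hv) (Real.rpow_nonneg hvp.le _)
    refine h1.trans_eq ?_
    rw [hCHbdef]
    simp only []
    rw [Real.rpow_add hvp, Real.rpow_neg hvp.le, Real.rpow_neg hvp.le]
    have h0 : v ^ c.nu ≠ 0 := (Real.rpow_pos_of_pos hvp _).ne'
    have hE : Real.exp (-B) ≠ 0 := (Real.exp_pos _).ne'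
    field_simp
    all_goals first
    | exact Or.inl (by ring)
    | ring
  set CH := ∫ v in Set.Ioi r0, CHb v with hCHdef
  have hH2le : ∀ η ∈ Set.Ici r0, H2f c s0 r0 L1 N1 K1 L2 N2 K2 f1 f2 η ≤ CH := by
    intro η hη
    have hint_q : IntervalIntegrable q2 volume r0 η := by
      apply ContinuousOn.intervalIntegrable
      rw [Set.uIcc_of_le hη]; exact hq2c.mono Set.Icc_subset_Ici_self
    have hint_C : IntervalIntegrable CHb volume r0 η := by
      apply ContinuousOn.intervalIntegrable
      rw [Set.uIcc_of_le hη]; exact hCHb_c.mono Set.Icc_subset_Ici_self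
    rw [hH2eq]
    calc (∫ v in r0..η, q2 v) ≤ ∫ v in r0..η, CHb v :=
        intervalIntegral.integral_mono_on hη hint_q hint_C (fun x hx => hq2le x hx.1)
      _ = ∫ v in Set.Ioc r0 η, CHb v := intervalIntegral.integral_of_le hη
      _ ≤ CH := setIntegral_mono_set hCHb_int
          ((ae_restrict_iff' measurableSet_Ioi).2 (Filter.Eventually.of_forall hCHb_nn))
          (HasSubset.Subset.eventuallyLE Set.Ioc_subset_Ioi_self)
  have hH2nn : ∀ η ∈ Set.Ici r0, 0 ≤ H2f c s0 r0 L1 N1 K1 L2 N2 K2 f1 f2 η := by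
    intro η hη
    rw [hH2eq]
    exact intervalIntegral.integral_nonneg hη (fun u hu => (hq2pos u hu.1).le)
  have hH2c : ContinuousOn (H2f c s0 r0 L1 N1 K1 L2 N2 K2 f1 f2) (Set.Ici r0) :=
    contOn_primitive_Ici hq2c
  have hCHnn : 0 ≤ CH := setIntegral_nonneg measurableSet_Ioi hCHb_nn
  -- G2
  set g2i : ℝ → ℝ := fun v => E2f c s0 r0 L1 N1 K1 L2 N2 K2 f1 f2 v
      * H2f c s0 r0 L1 N1 K1 L2 N2 K2 f1 f2 v / (L2 f2 v * v ^ c.nu) with hg2idef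
  have hG2eq : ∀ η, G2f c s0 r0 L1 N1 K1 L2 N2 K2 f1 f2 η = ∫ v in r0..η, g2i v :=
    fun η => rfl
  have hg2ic : ContinuousOn g2i (Set.Ici r0) :=
    (hE2c.mul hH2c).div (hL2c.mul hpow2c)
      (fun x hx => (mul_pos (hL2pos x hx) (Real.rpow_pos_of_pos (hx2 x hx) _)).ne')
  have hg2inn : ∀ v ∈ Set.Ici r0, 0 ≤ g2i v := fun v hv =>
    div_nonneg (mul_nonneg (hE2pos v).le (hH2nn v hv))
      (mul_pos (hL2pos v hv) (Real.rpow_pos_of_pos (hx2 v hv) _)).le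
  have hg2ile : ∀ v ∈ Set.Ici r0, g2i v ≤ CH / c.L2m * v ^ (-c.mu + -c.nu) := by
    intro v hv
    have hvp : 0 < v := hx2 v hv
    have h1 : g2i v ≤ CH / (c.L2m * (v ^ c.mu * v ^ c.nu)) := by
      refine div_le_div₀ hCHnn ?_ (by positivity) ?_
      · calc E2f c s0 r0 L1 N1 K1 L2 N2 K2 f1 f2 v
            * H2f c s0 r0 L1 N1 K1 L2 N2 K2 f1 f2 v ≤ 1 * CH :=
            mul_le_mul (hE2le1 v hv) (hH2le v hv) (hH2nn v hv) zero_le_one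
          _ = CH := one_mul _
      · calc c.L2m * (v ^ c.mu * v ^ c.nu) = c.L2m * v ^ c.mu * v ^ c.nu := by ring
          _ ≤ L2 f2 v * v ^ c.nu :=
            mul_le_mul_of_nonneg_right (hB2 f2 hf2 v hv).1 (Real.rpow_nonneg hvp.le _)
    refine h1.trans_eq ?_
    rw [Real.rpow_add hvp, Real.rpow_neg hvp.le, Real.rpow_neg hvp.le]
    have h0 : v ^ c.mu ≠ 0 := (Real.rpow_pos_of_pos hvp _).ne'
    have h1' : v ^ c.nu ≠ 0 := (Real.rpow_pos_of_pos hvp _).ne'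
    field_simp
    all_goals first
    | exact Or.inl (by ring)
    | ring
  have hg2int : IntegrableOn g2i (Set.Ioi r0) := by
    refine Integrable.mono'
      ((integrableOn_Ioi_rpow_of_lt (show -c.mu + -c.nu < -1 by linarith) hr0).const_mul
        (CH / c.L2m))
      ((hg2ic.mono Set.Ioi_subset_Ici_self).aestronglyMeasurable measurableSet_Ioi) ?_
    refine (ae_restrict_iff' measurableSet_Ioi).2 (Filter.Eventually.of_forall fun v hv => ?_)
    have hvI : v ∈ Set.Ici r0 := Set.Ioi_subset_Ici_self hv
    rw [Real.norm_eq_abs, abs_of_nonneg (hg2inn v hvI)]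
    exact hg2ile v hvI
  have hg2inn_ae : (0 : ℝ → ℝ) ≤ᵐ[volume.restrict (Set.Ioi r0)] g2i :=
    (ae_restrict_iff' measurableSet_Ioi).2
      (Filter.Eventually.of_forall fun v hv => hg2inn v (Set.Ioi_subset_Ici_self hv))
  set GI := ∫ v in Set.Ioi r0, g2i v with hGIdef
  have hG2tend : Tendsto (fun b => ∫ v in r0..b, g2i v) atTop (𝓝 GI) :=
    intervalIntegral_tendsto_integral_Ioi r0 hg2int tendsto_id
  have hG2Ival : G2I c s0 r0 L1 N1 K1 L2 N2 K2 f1 f2 = GI := by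
    have : Tendsto (G2f c s0 r0 L1 N1 K1 L2 N2 K2 f1 f2) atTop (𝓝 GI) := hG2tend
    exact this.limUnder_eq
  have hG2le : ∀ η ∈ Set.Ici r0, G2f c s0 r0 L1 N1 K1 L2 N2 K2 f1 f2 η ≤ GI := by
    intro η hη
    rw [hG2eq, intervalIntegral.integral_of_le hη]
    exact setIntegral_mono_set hg2int hg2inn_ae
      (HasSubset.Subset.eventuallyLE Set.Ioc_subset_Ioi_self)
  have hG2nn : ∀ η ∈ Set.Ici r0, 0 ≤ G2f c s0 r0 L1 N1 K1 L2 N2 K2 f1 f2 η := by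
    intro η hη
    rw [hG2eq]
    exact intervalIntegral.integral_nonneg hη (fun u hu => hg2inn u hu.1)
  have hG2c : ContinuousOn (G2f c s0 r0 L1 N1 K1 L2 N2 K2 f1 f2) (Set.Ici r0) :=
    contOn_primitive_Ici hg2ic
  have hGInn : 0 ≤ GI := setIntegral_nonneg measurableSet_Ioi
    (fun v hv => hg2inn v (Set.Ioi_subset_Ici_self hv))
  -- assemble Mset membership
  set Ac := c.D2s / H ^ 2 * G2I c s0 r0 L1 N1 K1 L2 N2 K2 f1 f2 - 1 with hAcdef
  set Bc := c.D2s / H ^ 2 with hBcdef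
  have hV2eq : ∀ η, V2f c s0 r0 L1 N1 K1 L2 N2 K2 f1 f2 η
      = Ac * (Phi2f c s0 r0 L1 N1 K1 L2 N2 K2 f1 f2 η
          / Phi2I c s0 r0 L1 N1 K1 L2 N2 K2 f1 f2)
        - Bc * G2f c s0 r0 L1 N1 K1 L2 N2 K2 f1 f2 η := fun η => rfl
  refine ⟨?_, ⟨|Ac| + Bc * GI, ?_⟩, ?_, ?_⟩
  · -- continuity
    show ContinuousOn _ (Set.Ici r0)
    have : ContinuousOn (fun η => Ac * (Phi2f c s0 r0 L1 N1 K1 L2 N2 K2 f1 f2 η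
        / Phi2I c s0 r0 L1 N1 K1 L2 N2 K2 f1 f2)
        - Bc * G2f c s0 r0 L1 N1 K1 L2 N2 K2 f1 f2 η) (Set.Ici r0) :=
      (continuousOn_const.mul (hPhi2c.div_const _)).sub (continuousOn_const.mul hG2c)
    exact this.congr (fun η _ => hV2eq η)
  · -- boundedness
    intro x hx
    have hBcnn : 0 ≤ Bc := (div_pos hD2s (pow_pos hH 2)).le
    have hq01 : 0 ≤ Phi2f c s0 r0 L1 N1 K1 L2 N2 K2 f1 f2 x
        / Phi2I c s0 r0 L1 N1 K1 L2 N2 K2 f1 f2 :=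
      div_nonneg (hPhi2nn x hx) hPhi2Ipos.le
    show |V2f c s0 r0 L1 N1 K1 L2 N2 K2 f1 f2 x| ≤ |Ac| + Bc * GI
    have hq11 : Phi2f c s0 r0 L1 N1 K1 L2 N2 K2 f1 f2 x
        / Phi2I c s0 r0 L1 N1 K1 L2 N2 K2 f1 f2 ≤ 1 :=
      (div_le_one hPhi2Ipos).2 (hPhi2le x hx)
    rw [hV2eq]
    calc |Ac * (Phi2f c s0 r0 L1 N1 K1 L2 N2 K2 f1 f2 x
          / Phi2I c s0 r0 L1 N1 K1 L2 N2 K2 f1 f2)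
          - Bc * G2f c s0 r0 L1 N1 K1 L2 N2 K2 f1 f2 x|
        ≤ |Ac * (Phi2f c s0 r0 L1 N1 K1 L2 N2 K2 f1 f2 x
          / Phi2I c s0 r0 L1 N1 K1 L2 N2 K2 f1 f2)|
          + |Bc * G2f c s0 r0 L1 N1 K1 L2 N2 K2 f1 f2 x| := abs_sub _ _
      _ ≤ |Ac| + Bc * GI := by
          refine add_le_add ?_ ?_
          · rw [abs_mul]
            calc |Ac| * |Phi2f c s0 r0 L1 N1 K1 L2 N2 K2 f1 f2 x
                / Phi2I c s0 r0 L1 N1 K1 L2 N2 K2 f1 f2| ≤ |Ac| * 1 := by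
                  refine mul_le_mul_of_nonneg_left ?_ (abs_nonneg _)
                  rw [abs_of_nonneg hq01]; exact hq11
              _ = |Ac| := mul_one _
          · rw [abs_mul, abs_of_nonneg hBcnn,
              abs_of_nonneg (hG2nn x hx)]
            exact mul_le_mul_of_nonneg_left (hG2le x hx) hBcnn
  · -- value at r0
    show V2f c s0 r0 L1 N1 K1 L2 N2 K2 f1 f2 r0 = 0
    rw [hV2eq, hPhi2eq, hG2eq]
    simp [intervalIntegral.integral_same]
  · -- limit at infinity
    have ht : Tendsto (fun η => Ac * (Phi2f c s0 r0 L1 N1 K1 L2 N2 K2 f1 f2 η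
        / Phi2I c s0 r0 L1 N1 K1 L2 N2 K2 f1 f2)
        - Bc * G2f c s0 r0 L1 N1 K1 L2 N2 K2 f1 f2 η) atTop
        (𝓝 (Ac * ((∫ v in Set.Ioi r0, p2 v) / Phi2I c s0 r0 L1 N1 K1 L2 N2 K2 f1 f2)
          - Bc * GI)) := by
      have h1 : Tendsto (fun η => Phi2f c s0 r0 L1 N1 K1 L2 N2 K2 f1 f2 η) atTop
          (𝓝 (∫ v in Set.Ioi r0, p2 v)) := hPhi2tend
      have h2 : Tendsto (fun η => G2f c s0 r0 L1 N1 K1 L2 N2 K2 f1 f2 η) atTop (𝓝 GI) :=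
        hG2tend
      exact ((h1.div_const _).const_mul Ac).sub (h2.const_mul Bc)
    have hval : Ac * ((∫ v in Set.Ioi r0, p2 v) / Phi2I c s0 r0 L1 N1 K1 L2 N2 K2 f1 f2)
        - Bc * GI = -1 := by
      rw [← hPhi2Ieq, div_self hPhi2Ipos.ne', mul_one, hAcdef, hG2Ival]
      ring
    rw [show (fun η => V2f c s0 r0 L1 N1 K1 L2 N2 K2 f1 f2 η)
      = (fun η => Ac * (Phi2f c s0 r0 L1 N1 K1 L2 N2 K2 f1 f2 η
          / Phi2I c s0 r0 L1 N1 K1 L2 N2 K2 f1 f2)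
        - Bc * G2f c s0 r0 L1 N1 K1 L2 N2 K2 f1 f2 η) from funext hV2eq, ← hval]
    exact ht



section Congr

variable (c : Cst) (s0 r0 : ℝ) (L1 N1 K1 L2 N2 K2 : (ℝ → ℝ) → ℝ → ℝ) (f1 f2 g1 g2 : ℝ → ℝ)

lemma supOn_eq_zero {S : Set ℝ} [Nonempty S] {f g : ℝ → ℝ} (h : Set.EqOn f g S) :
    supOn S (f - g) = 0 := by
  unfold supOn
  have : ∀ x : S, |(f - g) x.1| = 0 := fun x => by
    simp [Pi.sub_apply, sub_eq_zero.2 (h x.2)]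
  simp only [this, ciSup_const]

set_option maxHeartbeats 1000000 in
lemma Vcongr (hpos : PosC c s0 r0) (hA : Assum c s0 r0 L1 N1 K1 L2 N2 K2)
    (hf1 : f1 ∈ C1 s0 r0) (hf2 : f2 ∈ Mset r0) (hg1 : g1 ∈ C1 s0 r0) (hg2 : g2 ∈ Mset r0)
    (h1 : Set.EqOn f1 g1 (Set.Icc s0 r0)) (h2 : Set.EqOn f2 g2 (Set.Ici r0)) :
    (∀ η ∈ Set.Icc s0 r0, V1f c s0 r0 L1 N1 K1 L2 N2 K2 f1 f2 η
      = V1f c s0 r0 L1 N1 K1 L2 N2 K2 g1 g2 η) ∧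
    (∀ η ∈ Set.Ici r0, V2f c s0 r0 L1 N1 K1 L2 N2 K2 f1 f2 η
      = V2f c s0 r0 L1 N1 K1 L2 N2 K2 g1 g2 η) := by
  obtain ⟨-, -, -, -, hs0, hsr, -⟩ := hpos
  obtain ⟨-, -, -, -, hA3, hA4⟩ := hA
  have hne1 : Nonempty (Set.Icc s0 r0) := ⟨⟨s0, le_refl s0, hsr.le⟩⟩
  have hne2 : Nonempty (Set.Ici r0) := ⟨⟨r0, le_refl r0⟩⟩
  have hz1 : supOn (Set.Icc s0 r0) (f1 - g1) = 0 := supOn_eq_zero h1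
  have hz2 : supOn (Set.Ici r0) (f2 - g2) = 0 := supOn_eq_zero h2
  have heq : ∀ η ∈ Set.Icc s0 r0, L1 f1 η = L1 g1 η ∧ N1 f1 η = N1 g1 η ∧
      K1 f1 η = K1 g1 η := by
    intro η hη
    obtain ⟨e1, e2, e3⟩ := hA3 f1 hf1 g1 hg1 η hη
    rw [hz1, mul_zero] at e1 e2
    rw [hz1, mul_zero] at e3
    exact ⟨sub_eq_zero.1 (abs_eq_zero.1 (le_antisymm e1 (abs_nonneg _))),
      sub_eq_zero.1 (abs_eq_zero.1 (le_antisymm e2 (abs_nonneg _))),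
      sub_eq_zero.1 (abs_eq_zero.1 (le_antisymm e3 (abs_nonneg _)))⟩
  have heq2 : ∀ η ∈ Set.Ici r0, L2 f2 η = L2 g2 η ∧ N2 f2 η = N2 g2 η ∧
      K2 f2 η = K2 g2 η := by
    intro η hη
    obtain ⟨e1, e2, e3⟩ := hA4 f2 hf2 g2 hg2 η hη
    rw [hz2, mul_zero] at e1 e2
    rw [hz2, mul_zero] at e3
    exact ⟨sub_eq_zero.1 (abs_eq_zero.1 (le_antisymm e1 (abs_nonneg _))),
      sub_eq_zero.1 (abs_eq_zero.1 (le_antisymm e2 (abs_nonneg _))),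
      sub_eq_zero.1 (abs_eq_zero.1 (le_antisymm e3 (abs_nonneg _)))⟩
  have hHeq : Hf c s0 r0 L1 N1 K1 L2 N2 K2 f1 f2 = Hf c s0 r0 L1 N1 K1 L2 N2 K2 g1 g2 := by
    unfold Hf
    congr 1
    · refine intervalIntegral.integral_congr (fun v hv => ?_)
      rw [Set.uIcc_of_le hsr.le] at hv
      rw [(heq v hv).2.2]
    · refine setIntegral_congr_fun measurableSet_Ioi (fun v hv => ?_)
      rw [(heq2 v (Set.Ioi_subset_Ici_self hv)).2.2]
  have hsubI : ∀ η ∈ Set.Icc s0 r0, Set.uIcc s0 η ⊆ Set.Icc s0 r0 := by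
    intro η hη
    rw [Set.uIcc_of_le hη.1]
    exact fun v hv => ⟨hv.1, hv.2.trans hη.2⟩
  have hsubJ : ∀ η ∈ Set.Ici r0, Set.uIcc r0 η ⊆ Set.Ici r0 := by
    intro η hη
    rw [Set.uIcc_of_le hη]
    exact fun v hv => hv.1
  have hE1 : ∀ η ∈ Set.Icc s0 r0, E1f c s0 r0 L1 N1 K1 L2 N2 K2 f1 f2 η
      = E1f c s0 r0 L1 N1 K1 L2 N2 K2 g1 g2 η := by
    intro η hη
    unfold E1f
    rw [hHeq]
    congr 1
    congr 1
    refine intervalIntegral.integral_congr (fun v hv => ?_)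
    have hv' := hsubI η hη hv
    rw [(heq v hv').1, (heq v hv').2.1, (heq v hv').2.2]
  have hPhi1 : ∀ η ∈ Set.Icc s0 r0, Phi1f c s0 r0 L1 N1 K1 L2 N2 K2 f1 f2 η
      = Phi1f c s0 r0 L1 N1 K1 L2 N2 K2 g1 g2 η := by
    intro η hη
    unfold Phi1f
    refine intervalIntegral.integral_congr (fun v hv => ?_)
    have hv' := hsubI η hη hv
    rw [hE1 v hv', (heq v hv').1]
  have hH1 : ∀ η ∈ Set.Icc s0 r0, H1f c s0 r0 L1 N1 K1 L2 N2 K2 f1 f2 η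
      = H1f c s0 r0 L1 N1 K1 L2 N2 K2 g1 g2 η := by
    intro η hη
    unfold H1f
    refine intervalIntegral.integral_congr (fun v hv => ?_)
    have hv' := hsubI η hη hv
    rw [hE1 v hv', (heq v hv').2.2]
  have hG1 : ∀ η ∈ Set.Icc s0 r0, G1f c s0 r0 L1 N1 K1 L2 N2 K2 f1 f2 η
      = G1f c s0 r0 L1 N1 K1 L2 N2 K2 g1 g2 η := by
    intro η hη
    unfold G1f
    refine intervalIntegral.integral_congr (fun v hv => ?_)
    have hv' := hsubI η hη hv
    rw [hE1 v hv', hH1 v hv', (heq v hv').1]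
  have hE2 : ∀ η ∈ Set.Ici r0, E2f c s0 r0 L1 N1 K1 L2 N2 K2 f1 f2 η
      = E2f c s0 r0 L1 N1 K1 L2 N2 K2 g1 g2 η := by
    intro η hη
    unfold E2f
    rw [hHeq]
    congr 1
    congr 1
    refine intervalIntegral.integral_congr (fun v hv => ?_)
    have hv' := hsubJ η hη hv
    rw [(heq2 v hv').1, (heq2 v hv').2.1, (heq2 v hv').2.2]
  have hPhi2 : ∀ η ∈ Set.Ici r0, Phi2f c s0 r0 L1 N1 K1 L2 N2 K2 f1 f2 η
      = Phi2f c s0 r0 L1 N1 K1 L2 N2 K2 g1 g2 η := by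
    intro η hη
    unfold Phi2f
    refine intervalIntegral.integral_congr (fun v hv => ?_)
    have hv' := hsubJ η hη hv
    rw [hE2 v hv', (heq2 v hv').1]
  have hPhi2I : Phi2I c s0 r0 L1 N1 K1 L2 N2 K2 f1 f2
      = Phi2I c s0 r0 L1 N1 K1 L2 N2 K2 g1 g2 := by
    unfold Phi2I
    refine setIntegral_congr_fun measurableSet_Ioi (fun v hv => ?_)
    have hv' : v ∈ Set.Ici r0 := Set.Ioi_subset_Ici_self hv
    rw [hE2 v hv', (heq2 v hv').1]
  have hH2 : ∀ η ∈ Set.Ici r0, H2f c s0 r0 L1 N1 K1 L2 N2 K2 f1 f2 η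
      = H2f c s0 r0 L1 N1 K1 L2 N2 K2 g1 g2 η := by
    intro η hη
    unfold H2f
    refine intervalIntegral.integral_congr (fun v hv => ?_)
    have hv' := hsubJ η hη hv
    rw [hE2 v hv', (heq2 v hv').2.2]
  have hG2 : ∀ η ∈ Set.Ici r0, G2f c s0 r0 L1 N1 K1 L2 N2 K2 f1 f2 η
      = G2f c s0 r0 L1 N1 K1 L2 N2 K2 g1 g2 η := by
    intro η hη
    unfold G2f
    refine intervalIntegral.integral_congr (fun v hv => ?_)
    have hv' := hsubJ η hη hv
    rw [hE2 v hv', hH2 v hv', (heq2 v hv').1]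
  have hG2I : G2I c s0 r0 L1 N1 K1 L2 N2 K2 f1 f2
      = G2I c s0 r0 L1 N1 K1 L2 N2 K2 g1 g2 := by
    unfold G2I limUnder
    rw [Filter.map_congr (Filter.eventually_atTop.2 ⟨r0, fun b hb => hG2 b hb⟩)]
  constructor
  · intro η hη
    unfold V1f
    rw [hHeq, hPhi1 η hη, hG1 η hη, hPhi1 r0 ⟨hsr.le, le_refl r0⟩, hG1 r0 ⟨hsr.le, le_refl r0⟩]
  · intro η hη
    unfold V2f
    rw [hHeq, hPhi2 η hη, hG2 η hη, hPhi2I, hG2I]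

end Congr

section Part2Infra

/-- Extension of a continuous map on `[s0,r0]` to `ℝ`. -/
def ext1fun (s0 r0 : ℝ) (h : s0 ≤ r0) (F : C(Set.Icc s0 r0, ℝ)) : ℝ → ℝ :=
  fun x => F (Set.projIcc s0 r0 h x)

/-- Extension of a bounded continuous map on `[r0,∞)` to `ℝ`. -/
def ext2fun (r0 : ℝ) (G : BoundedContinuousFunction (Set.Ici r0) ℝ) : ℝ → ℝ :=
  fun x => G ⟨max x r0, le_max_right x r0⟩

/-- The subset of bounded continuous functions corresponding to `ℳ`. -/
def MS (r0 : ℝ) : Set (BoundedContinuousFunction (Set.Ici r0) ℝ) :=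
  {G | ext2fun r0 G ∈ Mset r0}

lemma ext1fun_mem (s0 r0 : ℝ) (h : s0 ≤ r0) (F : C(Set.Icc s0 r0, ℝ)) :
    ext1fun s0 r0 h F ∈ C1 s0 r0 :=
  (F.continuous.comp continuous_projIcc).continuousOn

lemma ext1fun_eq (s0 r0 : ℝ) (h : s0 ≤ r0) (F : C(Set.Icc s0 r0, ℝ)) {x : ℝ}
    (hx : x ∈ Set.Icc s0 r0) : ext1fun s0 r0 h F x = F ⟨x, hx⟩ := by
  unfold ext1fun
  rw [Set.projIcc_of_mem h hx]

lemma ext2fun_eq (r0 : ℝ) (G : BoundedContinuousFunction (Set.Ici r0) ℝ) {x : ℝ}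
    (hx : x ∈ Set.Ici r0) : ext2fun r0 G x = G ⟨x, hx⟩ := by
  unfold ext2fun
  congr 1
  exact Subtype.ext (max_eq_left hx)

lemma ext2fun_cont (r0 : ℝ) (G : BoundedContinuousFunction (Set.Ici r0) ℝ) :
    Continuous (ext2fun r0 G) :=
  G.continuous.comp ((continuous_id.max continuous_const).subtype_mk _)

lemma isClosed_MS (r0 : ℝ) : IsClosed (MS r0) := by
  refine isClosed_of_closure_subset (fun G hG => ?_)
  have key : ∀ ε > 0, ∃ b : BoundedContinuousFunction (Set.Ici r0) ℝ,
      b ∈ MS r0 ∧ dist G b < ε := fun ε hε => Metric.mem_closure_iff.1 hG ε hε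
  refine ⟨(ext2fun_cont r0 G).continuousOn, ⟨‖G‖, fun x _ => ?_⟩, ?_, ?_⟩
  · exact G.norm_coe_le_norm _
  · -- value at r0
    have habs : ∀ ε > 0, |ext2fun r0 G r0| < ε := by
      intro ε hε
      obtain ⟨b, hbS, hd⟩ := key ε hε
      have hb0 : ext2fun r0 b r0 = 0 := hbS.2.2.1
      have : |ext2fun r0 G r0| = |ext2fun r0 G r0 - ext2fun r0 b r0| := by rw [hb0, sub_zero]
      rw [this]
      calc |ext2fun r0 G r0 - ext2fun r0 b r0|
          = dist (G ⟨max r0 r0, le_max_right r0 r0⟩) (b ⟨max r0 r0, le_max_right r0 r0⟩) := by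
            rw [Real.dist_eq]; rfl
        _ ≤ dist G b := BoundedContinuousFunction.dist_coe_le_dist _
        _ < ε := hd
    by_contra hne
    have h0 : 0 < |ext2fun r0 G r0| := abs_pos.2 hne
    exact absurd (habs _ h0) (lt_irrefl _)
  · -- tendsto
    rw [Metric.tendsto_atTop]
    intro ε hε
    obtain ⟨b, hbS, hd⟩ := key (ε / 2) (by linarith)
    obtain ⟨N, hN⟩ := Metric.tendsto_atTop.1 hbS.2.2.2 (ε / 2) (by linarith)
    refine ⟨N, fun x hx => ?_⟩
    calc dist (ext2fun r0 G x) (-1)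
        ≤ dist (ext2fun r0 G x) (ext2fun r0 b x) + dist (ext2fun r0 b x) (-1) :=
          dist_triangle _ _ _
      _ < ε := by
          have h1 : dist (ext2fun r0 G x) (ext2fun r0 b x) ≤ dist G b :=
            BoundedContinuousFunction.dist_coe_le_dist _
          have h2 := hN x hx
          linarith

lemma MS_nonempty (r0 : ℝ) : ∃ G : BoundedContinuousFunction (Set.Ici r0) ℝ, G ∈ MS r0 := by
  refine ⟨BoundedContinuousFunction.ofNormedAddCommGroup
    (fun x : Set.Ici r0 => max (-1) (r0 - x.1)) ?_ 1 ?_, ?_, ⟨1, fun x _ => ?_⟩, ?_, ?_⟩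
  · exact continuous_const.max (continuous_const.sub continuous_subtype_val)
  · intro x
    have hx : r0 - x.1 ≤ 0 := by have := x.2; simp only [Set.mem_Ici] at this; linarith
    rw [Real.norm_eq_abs, abs_le]
    constructor
    · simp [le_max_left]
    · calc max (-1) (r0 - x.1) ≤ max (-1) 0 := max_le_max (le_refl _) hx
        _ ≤ 1 := by norm_num
  · exact (ext2fun_cont r0 _).continuousOn
  · show |max (-1) (r0 - max x r0)| ≤ 1
    have hx : r0 - max x r0 ≤ 0 := by have := le_max_right x r0; linarith
    rw [abs_le]
    constructor
    · simp [le_max_left]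
    · calc max (-1) (r0 - max x r0) ≤ max (-1) 0 := max_le_max (le_refl _) hx
      _ ≤ 1 := by norm_num
  · show max (-1) (r0 - max r0 r0) = 0
    simp
  · show Tendsto (fun x => max (-1) (r0 - max x r0)) atTop (𝓝 (-1))
    refine Tendsto.congr' ?_ tendsto_const_nhds
    filter_upwards [Filter.eventually_ge_atTop (r0 + 1)] with x hx
    have h1 : max x r0 = x := max_eq_left (by linarith)
    rw [h1]
    exact (max_eq_left (by linarith)).symm

lemma abs_le_supOn {S : Set ℝ} {h : ℝ → ℝ} {x : ℝ} (hx : x ∈ S)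
    (hb : ∃ C, ∀ y ∈ S, |h y| ≤ C) : |h x| ≤ supOn S h := by
  obtain ⟨C, hC⟩ := hb
  have hbdd : BddAbove (Set.range fun y : S => |h y.1|) := by
    refine ⟨C, ?_⟩
    rintro _ ⟨y, rfl⟩
    exact hC y y.2
  exact le_ciSup hbdd (⟨x, hx⟩ : S)

lemma supOn_le {S : Set ℝ} [Nonempty S] {h : ℝ → ℝ} {C : ℝ} (hC : ∀ y ∈ S, |h y| ≤ C) :
    supOn S h ≤ C :=
  ciSup_le fun y => hC y y.2

lemma supOn_nonneg (S : Set ℝ) (h : ℝ → ℝ) : 0 ≤ supOn S h :=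
  Real.iSup_nonneg fun x => abs_nonneg _

end Part2Infra

lemma Mset_comp {r0 : ℝ} {f : ℝ → ℝ} (hf : f ∈ Mset r0) :
    (fun x => f (max x r0)) ∈ Mset r0 := by
  obtain ⟨hc, ⟨C, hC⟩, h0, ht⟩ := hf
  refine ⟨?_, ⟨C, fun x _ => hC _ (le_max_right x r0)⟩, by simp [h0], ?_⟩
  · exact hc.comp ((continuous_id.max continuous_const).continuousOn)
      (fun x _ => le_max_right x r0)
  · refine ht.congr' ?_
    filter_upwards [Filter.eventually_ge_atTop r0] with x hx
    rw [max_eq_left hx]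

set_option maxHeartbeats 4000000 in
theorem stmt19 (c : Cst) (s0 r0 : ℝ) (L1 N1 K1 L2 N2 K2 : (ℝ → ℝ) → ℝ → ℝ)
    (hpos : PosC c s0 r0) (hA : Assum c s0 r0 L1 N1 K1 L2 N2 K2) :
    (∀ f1 ∈ C1 s0 r0, ∀ f2 ∈ Mset r0,
      (fun η => V1f c s0 r0 L1 N1 K1 L2 N2 K2 f1 f2 η) ∈ C1 s0 r0 ∧
      (fun η => V2f c s0 r0 L1 N1 K1 L2 N2 K2 f1 f2 η) ∈ Mset r0) ∧
    ((∃ ε : ℝ, ε < 1 ∧ ∀ f1 ∈ C1 s0 r0, ∀ f2 ∈ Mset r0, ∀ g1 ∈ C1 s0 r0, ∀ g2 ∈ Mset r0,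
        max (supOn (Set.Icc s0 r0) (fun η => V1f c s0 r0 L1 N1 K1 L2 N2 K2 f1 f2 η - V1f c s0 r0 L1 N1 K1 L2 N2 K2 g1 g2 η))
            (supOn (Set.Ici r0) (fun η => V2f c s0 r0 L1 N1 K1 L2 N2 K2 f1 f2 η - V2f c s0 r0 L1 N1 K1 L2 N2 K2 g1 g2 η))
          ≤ ε * pairNorm s0 r0 f1 f2 g1 g2) →
      ∃ f1s f2s : ℝ → ℝ, f1s ∈ C1 s0 r0 ∧ f2s ∈ Mset r0 ∧
        (∀ η ∈ Set.Icc s0 r0, V1f c s0 r0 L1 N1 K1 L2 N2 K2 f1s f2s η = f1s η) ∧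
        (∀ η ∈ Set.Ici r0, V2f c s0 r0 L1 N1 K1 L2 N2 K2 f1s f2s η = f2s η) ∧
        ∀ g1 g2 : ℝ → ℝ, g1 ∈ C1 s0 r0 → g2 ∈ Mset r0 →
          (∀ η ∈ Set.Icc s0 r0, V1f c s0 r0 L1 N1 K1 L2 N2 K2 g1 g2 η = g1 η) →
          (∀ η ∈ Set.Ici r0, V2f c s0 r0 L1 N1 K1 L2 N2 K2 g1 g2 η = g2 η) →
          (∀ η ∈ Set.Icc s0 r0, g1 η = f1s η) ∧ (∀ η ∈ Set.Ici r0, g2 η = f2s η)) := by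
  constructor
  · intro f1 hf1 f2 hf2
    exact part1 c s0 r0 L1 N1 K1 L2 N2 K2 f1 f2 hpos hA hf1 hf2
  rintro ⟨ε, hε1, hcon⟩
  have hsr : s0 < r0 := hpos.2.2.2.2.2.1
  have hle : s0 ≤ r0 := hsr.le
  haveI hne1 : Nonempty (Set.Icc s0 r0) := ⟨⟨s0, le_refl s0, hle⟩⟩
  haveI hne2 : Nonempty (Set.Ici r0) := ⟨⟨r0, le_refl r0⟩⟩
  haveI : CompleteSpace (MS r0) := (isClosed_MS r0).completeSpace_coe
  obtain ⟨G0, hG0⟩ := MS_nonempty r0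
  haveI : Nonempty (MS r0) := ⟨⟨G0, hG0⟩⟩
  set ε' : ℝ := max ε 0 with hε'def
  have hε'0 : 0 ≤ ε' := le_max_right ε 0
  have hε'1 : ε' < 1 := max_lt hε1 one_pos
  -- the operator T on the product space
  set T : C(Set.Icc s0 r0, ℝ) × (MS r0) → C(Set.Icc s0 r0, ℝ) × (MS r0) := fun p =>
    (⟨fun x => V1f c s0 r0 L1 N1 K1 L2 N2 K2 (ext1fun s0 r0 hle p.1) (ext2fun r0 p.2.1) x.1,
      (part1 c s0 r0 L1 N1 K1 L2 N2 K2 _ _ hpos hA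
        (ext1fun_mem s0 r0 hle p.1) p.2.2).1.restrict⟩,
     ⟨⟨⟨fun x => V2f c s0 r0 L1 N1 K1 L2 N2 K2 (ext1fun s0 r0 hle p.1) (ext2fun r0 p.2.1) x.1,
        (part1 c s0 r0 L1 N1 K1 L2 N2 K2 _ _ hpos hA
          (ext1fun_mem s0 r0 hle p.1) p.2.2).2.1.restrict⟩, by
          obtain ⟨C, hC⟩ := (part1 c s0 r0 L1 N1 K1 L2 N2 K2 _ _ hpos hA
            (ext1fun_mem s0 r0 hle p.1) p.2.2).2.2.1
          refine ⟨C + C, fun x y => ?_⟩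
          rw [Real.dist_eq]
          exact le_trans (abs_sub _ _) (add_le_add (hC _ x.2) (hC _ y.2))⟩,
      Mset_comp ((part1 c s0 r0 L1 N1 K1 L2 N2 K2 _ _ hpos hA
        (ext1fun_mem s0 r0 hle p.1) p.2.2).2)⟩) with hTdef
  -- contraction estimate
  have hdist : ∀ p q : C(Set.Icc s0 r0, ℝ) × (MS r0), dist (T p) (T q) ≤ ε' * dist p q := by
    intro p q
    have hf1 := ext1fun_mem s0 r0 hle p.1
    have hf2 : ext2fun r0 p.2.1 ∈ Mset r0 := p.2.2
    have hg1 := ext1fun_mem s0 r0 hle q.1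
    have hg2 : ext2fun r0 q.2.1 ∈ Mset r0 := q.2.2
    have hsup := hcon _ hf1 _ hf2 _ hg1 _ hg2
    have hpnn : 0 ≤ pairNorm s0 r0 (ext1fun s0 r0 hle p.1) (ext2fun r0 p.2.1)
        (ext1fun s0 r0 hle q.1) (ext2fun r0 q.2.1) :=
      le_trans (supOn_nonneg _ _) (le_max_left _ _)
    have hpn : pairNorm s0 r0 (ext1fun s0 r0 hle p.1) (ext2fun r0 p.2.1)
        (ext1fun s0 r0 hle q.1) (ext2fun r0 q.2.1) ≤ dist p q := by
      unfold pairNorm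
      refine max_le ?_ ?_
      · refine le_trans (supOn_le (C := dist p.1 q.1) (fun y hy => ?_)) ?_
        · show |(ext1fun s0 r0 hle p.1 - ext1fun s0 r0 hle q.1) y| ≤ dist p.1 q.1
          rw [Pi.sub_apply, ext1fun_eq s0 r0 hle p.1 hy, ext1fun_eq s0 r0 hle q.1 hy,
            ← Real.dist_eq]
          exact ContinuousMap.dist_apply_le_dist _
        · rw [Prod.dist_eq]; exact le_max_left _ _
      · refine le_trans (supOn_le (C := dist p.2.1 q.2.1) (fun y hy => ?_)) ?_
        · show |(ext2fun r0 p.2.1 - ext2fun r0 q.2.1) y| ≤ dist p.2.1 q.2.1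
          rw [Pi.sub_apply, ext2fun_eq r0 p.2.1 hy, ext2fun_eq r0 q.2.1 hy, ← Real.dist_eq]
          exact BoundedContinuousFunction.dist_coe_le_dist _
        · rw [Prod.dist_eq, Subtype.dist_eq]
          exact le_max_right _ _
    have hchain : ε * pairNorm s0 r0 (ext1fun s0 r0 hle p.1) (ext2fun r0 p.2.1)
        (ext1fun s0 r0 hle q.1) (ext2fun r0 q.2.1) ≤ ε' * dist p q :=
      le_trans (mul_le_mul_of_nonneg_right (le_max_left ε 0) hpnn)
        (mul_le_mul_of_nonneg_left hpn hε'0)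
    have hb1 : supOn (Set.Icc s0 r0)
        (fun η => V1f c s0 r0 L1 N1 K1 L2 N2 K2 (ext1fun s0 r0 hle p.1) (ext2fun r0 p.2.1) η
          - V1f c s0 r0 L1 N1 K1 L2 N2 K2 (ext1fun s0 r0 hle q.1) (ext2fun r0 q.2.1) η)
        ≤ ε' * dist p q := le_trans (le_trans (le_max_left _ _) hsup) hchain
    have hb2 : supOn (Set.Ici r0)
        (fun η => V2f c s0 r0 L1 N1 K1 L2 N2 K2 (ext1fun s0 r0 hle p.1) (ext2fun r0 p.2.1) η
          - V2f c s0 r0 L1 N1 K1 L2 N2 K2 (ext1fun s0 r0 hle q.1) (ext2fun r0 q.2.1) η)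
        ≤ ε' * dist p q := le_trans (le_trans (le_max_right _ _) hsup) hchain
    -- boundedness of the difference functions
    have hVb1 : ∃ C, ∀ y ∈ Set.Icc s0 r0,
        |(fun η => V1f c s0 r0 L1 N1 K1 L2 N2 K2 (ext1fun s0 r0 hle p.1) (ext2fun r0 p.2.1) η
          - V1f c s0 r0 L1 N1 K1 L2 N2 K2 (ext1fun s0 r0 hle q.1) (ext2fun r0 q.2.1) η) y|
          ≤ C := by
      have hc1 := (part1 c s0 r0 L1 N1 K1 L2 N2 K2 _ _ hpos hA hf1 hf2).1
      have hc2 := (part1 c s0 r0 L1 N1 K1 L2 N2 K2 _ _ hpos hA hg1 hg2).1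
      obtain ⟨C, hC⟩ := IsCompact.exists_bound_of_continuousOn isCompact_Icc (hc1.sub hc2)
      exact ⟨C, fun y hy => hC y hy⟩
    have hVb2 : ∃ C, ∀ y ∈ Set.Ici r0,
        |(fun η => V2f c s0 r0 L1 N1 K1 L2 N2 K2 (ext1fun s0 r0 hle p.1) (ext2fun r0 p.2.1) η
          - V2f c s0 r0 L1 N1 K1 L2 N2 K2 (ext1fun s0 r0 hle q.1) (ext2fun r0 q.2.1) η) y|
          ≤ C := by
      obtain ⟨C1, hC1⟩ := (part1 c s0 r0 L1 N1 K1 L2 N2 K2 _ _ hpos hA hf1 hf2).2.2.1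
      obtain ⟨C2, hC2⟩ := (part1 c s0 r0 L1 N1 K1 L2 N2 K2 _ _ hpos hA hg1 hg2).2.2.1
      exact ⟨C1 + C2, fun y hy =>
        le_trans (abs_sub _ _) (add_le_add (hC1 y hy) (hC2 y hy))⟩
    rw [Prod.dist_eq]
    refine max_le ?_ ?_
    · refine (ContinuousMap.dist_le (mul_nonneg hε'0 dist_nonneg)).2 (fun x => ?_)
      refine le_trans ?_ hb1
      rw [Real.dist_eq]
      exact abs_le_supOn x.2 hVb1
    · rw [Subtype.dist_eq]
      refine (BoundedContinuousFunction.dist_le (mul_nonneg hε'0 dist_nonneg)).2 (fun x => ?_)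
      refine le_trans ?_ hb2
      rw [Real.dist_eq]
      exact abs_le_supOn x.2 hVb2
  have hK1 : (⟨ε', hε'0⟩ : NNReal) < 1 := by
    exact NNReal.coe_lt_coe.1 hε'1
  have hctr : ContractingWith ⟨ε', hε'0⟩ T :=
    ⟨hK1, LipschitzWith.of_dist_le_mul hdist⟩
  set z := ContractingWith.fixedPoint T hctr with hzdef
  have hz : T z = z := hctr.fixedPoint_isFixedPt
  have hz1 : (T z).1 = z.1 := congrArg Prod.fst hz
  have hz2 : ((T z).2 : BoundedContinuousFunction (Set.Ici r0) ℝ) = z.2.1 := by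
    rw [hz]
  refine ⟨ext1fun s0 r0 hle z.1, ext2fun r0 z.2.1, ext1fun_mem s0 r0 hle z.1, z.2.2,
    ?_, ?_, ?_⟩
  · intro η hη
    have h := ContinuousMap.congr_fun hz1 ⟨η, hη⟩
    rw [ext1fun_eq s0 r0 hle z.1 hη]
    exact h
  · intro η hη
    have h := DFunLike.congr_fun hz2 ⟨η, hη⟩
    rw [ext2fun_eq r0 z.2.1 hη]
    exact h
  · intro g1 g2 hg1 hg2 hfix1 hfix2
    set w1 : C(Set.Icc s0 r0, ℝ) := ⟨fun x => g1 x.1, hg1.restrict⟩ with hw1def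
    set w2 : BoundedContinuousFunction (Set.Ici r0) ℝ :=
      ⟨⟨fun x => g2 x.1, hg2.1.restrict⟩, by
        obtain ⟨C, hC⟩ := hg2.2.1
        refine ⟨C + C, fun x y => ?_⟩
        rw [Real.dist_eq]
        exact le_trans (abs_sub _ _) (add_le_add (hC _ x.2) (hC _ y.2))⟩ with hw2def
    have hw2mem : w2 ∈ MS r0 := Mset_comp hg2
    set w : C(Set.Icc s0 r0, ℝ) × (MS r0) := (w1, ⟨w2, hw2mem⟩) with hwdef
    have he1 : Set.EqOn (ext1fun s0 r0 hle w1) g1 (Set.Icc s0 r0) := fun x hx => by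
      rw [ext1fun_eq s0 r0 hle w1 hx]; rfl
    have he2 : Set.EqOn (ext2fun r0 w2) g2 (Set.Ici r0) := fun x hx => by
      rw [ext2fun_eq r0 w2 hx]; rfl
    have hcong := Vcongr c s0 r0 L1 N1 K1 L2 N2 K2 (ext1fun s0 r0 hle w1) (ext2fun r0 w2)
      g1 g2 hpos hA (ext1fun_mem s0 r0 hle w1) hw2mem hg1 hg2 he1 he2
    have hw : T w = w := by
      refine Prod.ext ?_ ?_
      · refine ContinuousMap.ext (fun x => ?_)
        show V1f c s0 r0 L1 N1 K1 L2 N2 K2 (ext1fun s0 r0 hle w1) (ext2fun r0 w2) x.1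
          = g1 x.1
        rw [hcong.1 x.1 x.2]
        exact hfix1 x.1 x.2
      · refine Subtype.ext (BoundedContinuousFunction.ext (fun x => ?_))
        show V2f c s0 r0 L1 N1 K1 L2 N2 K2 (ext1fun s0 r0 hle w1) (ext2fun r0 w2) x.1
          = g2 x.1
        rw [hcong.2 x.1 x.2]
        exact hfix2 x.1 x.2
    have hwz : w = z := hctr.fixedPoint_unique hw
    constructor
    · intro η hη
      have h1 : g1 η = w1 ⟨η, hη⟩ := rfl
      rw [h1, ext1fun_eq s0 r0 hle z.1 hη, show w1 = z.1 from congrArg Prod.fst hwz]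
    · intro η hη
      have h1 : g2 η = w2 ⟨η, hη⟩ := rfl
      have h2 : w2 = z.2.1 := by rw [← hwz]
      rw [h1, ext2fun_eq r0 z.2.1 hη, h2]
end Part1
end
end
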